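/- arXiv:1709.00632 — 5 statements merged into one kernel-verified Lean document; each statement's English description precedes it below -/
import Mathlib

section
/- Assume (G0), (G4) and (G5). Then a function u ∈ C⁰(X) with u ≥ u_∅ is G-convex if and only if there exists a lower semicontinuous function v : cl(Y) → cl(Z) with v(y_∅) ≤ z_∅ such that u(x) = max_{y ∈ cl(Y)} G(x,y,v(y)) for all x ∈ X (with the maximum attained). -/
/-!
Common framework for "The principal-agent problem: convexity/concavity of the
principal's problem" (McCann–Zhang).

Agent types live in `X ⊆ ℝ^m`, product types in `Y ⊆ ℝ^n`, prices in
`Z = (z̲, z̄) ⊆ ℝ` with `z̲` finite and `z̄ ∈ (z̲, +∞]` (an `EReal`).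
The direct utility is `G(x,y,z)` and the principal's profit density `π(x,y,z)`.
-/

open Set MeasureTheory Filter Topology

noncomputable section

namespace PrincipalAgent

/-- Euclidean space `ℝ^k`. -/
abbrev E (k : ℕ) : Type := EuclideanSpace ℝ (Fin k)

variable {m n : ℕ}

/-- The open price interval `(z̲, z̄)`, with `z̄` possibly `+∞`. -/
def priceSet (zl : ℝ) (zu : EReal) : Set ℝ := {z : ℝ | zl < z ∧ (z : EReal) < zu}

/-- The filter of `z → z̄` from the left (from within `Z`); when `z̄ = +∞`
this is `atTop`. -/
def zFilter (zu : EReal) : Filter ℝ :=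
  Filter.comap (fun z : ℝ => (z : EReal)) (𝓝[<] zu)

/-- `G_x`, the gradient of `G` in the agent variable. -/
def Gx (G : E m → E n → ℝ → ℝ) (x : E m) (y : E n) (z : ℝ) : E m :=
  gradient (fun x' => G x' y z) x

/-- `G_z`, the partial derivative of `G` in the price variable. -/
def Gz (G : E m → E n → ℝ → ℝ) (x : E m) (y : E n) (z : ℝ) : ℝ :=
  deriv (fun z' => G x y z') z

/-- The map `(y,z) ↦ (G_x, G)(x,y,z) ∈ ℝ^m × ℝ ≅ ℝ^{m+1}`. -/
def Phi (G : E m → E n → ℝ → ℝ) (x : E m) (p : E n × ℝ) : E m × ℝ :=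
  (Gx G x p.1 p.2, G x p.1 p.2)

/-- `u : X → ℝ` is `G`-convex (Definition 3.2). -/
def GConvex (X : Set (E m)) (Y : Set (E n)) (Z : Set ℝ)
    (G : E m → E n → ℝ → ℝ) (u : E m → ℝ) : Prop :=
  ∀ x₀ ∈ X, ∃ y₀ ∈ closure Y, ∃ z₀ ∈ closure Z,
    u x₀ = G x₀ y₀ z₀ ∧ ∀ x ∈ X, G x y₀ z₀ ≤ u x

/-- The `G`-subdifferential `∂^G u(x)` of `u` at `x` (Definition 3.3).  Under
(G4), `z ↦ G(x,y,z)` is injective on `cl Z`, so the price `z` appearing below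
is exactly `H(x,y,u(x))`, the unique price at which product `y` brings agent
`x` the utility `u(x)`. -/
def GSubdiff (X : Set (E m)) (Y : Set (E n)) (Z : Set ℝ)
    (G : E m → E n → ℝ → ℝ) (u : E m → ℝ) (x : E m) : Set (E n) :=
  {y | y ∈ closure Y ∧ ∃ z ∈ closure Z, G x y z = u x ∧ ∀ x' ∈ X, G x' y z ≤ u x'}

/-- The `G`-segment (2.1) at `x₀`: a curve `γ = (y_t, z_t)` in `cl(Y × Z)`
on which `(G_x, G)(x₀, ·, ·)` is affinely interpolated between its endpoint
values. -/
def IsGSegment (Y : Set (E n)) (Z : Set ℝ) (G : E m → E n → ℝ → ℝ)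
    (x₀ : E m) (γ : ℝ → E n × ℝ) : Prop :=
  (∀ t ∈ Icc (0:ℝ) 1, γ t ∈ closure Y ×ˢ closure Z) ∧
  ∀ t ∈ Icc (0:ℝ) 1,
    Phi G x₀ (γ t) = (1 - t) • Phi G x₀ (γ 0) + t • Phi G x₀ (γ 1)

/-- (G0): `G ∈ C¹(cl(X × Y × Z))`. -/
def CondG0 (X : Set (E m)) (Y : Set (E n)) (Z : Set ℝ)
    (G : E m → E n → ℝ → ℝ) : Prop :=
  ContDiffOn ℝ 1 (fun p : E m × E n × ℝ => G p.1 p.2.1 p.2.2)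
    (closure X ×ˢ (closure Y ×ˢ closure Z))

/-- (G1): for each `x ∈ X`, the map `(y,z) ∈ cl(Y × Z) ↦ (G_x, G)(x,y,z)` is a
homeomorphism onto its range (continuous, injective, with continuous inverse). -/
def CondG1 (X : Set (E m)) (Y : Set (E n)) (Z : Set ℝ)
    (G : E m → E n → ℝ → ℝ) : Prop :=
  ∀ x ∈ X, ContinuousOn (Phi G x) (closure Y ×ˢ closure Z) ∧
    InjOn (Phi G x) (closure Y ×ˢ closure Z) ∧
    ∃ ψ : E m × ℝ → E n × ℝ,
      ContinuousOn ψ (Phi G x '' (closure Y ×ˢ closure Z)) ∧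
      ∀ p ∈ closure Y ×ˢ closure Z, ψ (Phi G x p) = p

/-- (G2): the range `(G_x,G)(x, cl(Y × Z))` is convex. -/
def CondG2 (X : Set (E m)) (Y : Set (E n)) (Z : Set ℝ)
    (G : E m → E n → ℝ → ℝ) : Prop :=
  ∀ x ∈ X, Convex ℝ (Phi G x '' (closure Y ×ˢ closure Z))

/-- (G3): `t ↦ G(x, y_t, z_t)` is convex along every `G`-segment. -/
def CondG3 (X : Set (E m)) (Y : Set (E n)) (Z : Set ℝ)
    (G : E m → E n → ℝ → ℝ) : Prop :=
  ∀ x ∈ X, ∀ x₀ ∈ X, ∀ γ : ℝ → E n × ℝ, IsGSegment Y Z G x₀ γ →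
    ConvexOn ℝ (Icc (0:ℝ) 1) (fun t => G x (γ t).1 (γ t).2)

/-- (G4): `G_z < 0` on `X × cl Y × cl Z`. -/
def CondG4 (X : Set (E m)) (Y : Set (E n)) (Z : Set ℝ)
    (G : E m → E n → ℝ → ℝ) : Prop :=
  ∀ x ∈ X, ∀ y ∈ closure Y, ∀ z ∈ closure Z, Gz G x y z < 0

/-- (G5): `π ∈ C⁰(cl(X × Y × Z))`; `(y₀, z₀) = (y_∅, z_∅)` lies in `cl(Y × Z)`;
`Gbar x y = G(x,y,z̄) := lim_{z→z̄} G(x,y,z)` satisfies `Gbar x y ≤ G(x,y_∅,z_∅)`,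
strictly when `z̄ = +∞`, in which case also `G(x,y,z) < G(x,y_∅,z_∅)` for all
sufficiently large `z`. -/
def CondG5 (X : Set (E m)) (Y : Set (E n)) (Z : Set ℝ) (zu : EReal)
    (G : E m → E n → ℝ → ℝ) (π : E m → E n → ℝ → ℝ)
    (Gbar : E m → E n → ℝ) (y0 : E n) (z0 : ℝ) : Prop :=
  ContinuousOn (fun p : E m × E n × ℝ => π p.1 p.2.1 p.2.2)
    (closure X ×ˢ (closure Y ×ˢ closure Z)) ∧
  y0 ∈ closure Y ∧ z0 ∈ closure Z ∧
  (∀ x ∈ X, ∀ y ∈ closure Y,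
    Tendsto (fun z : ℝ => G x y z) (zFilter zu) (𝓝 (Gbar x y)) ∧
    Gbar x y ≤ G x y0 z0) ∧
  (zu = ⊤ → (∀ x ∈ X, ∀ y ∈ closure Y, Gbar x y < G x y0 z0) ∧
    ∃ zbig : ℝ, ∀ z : ℝ, zbig ≤ z → ∀ x ∈ X, ∀ y ∈ closure Y, G x y z < G x y0 z0)

/-- (G6): `G ∈ C²(cl(X×Y×Z))` and the `(m+1)×(n+1)` matrix
`D_x̄ D_ȳ Ḡ(x,-1,y,z)` (where `Ḡ((x,x₀),(y,z)) = x₀ G(x,y,z)`) has full rank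
`n+1`; equivalently the linear map `v ↦ (D_x(D_ȳG · v), D_ȳG · v)` is injective. -/
def CondG6 (X : Set (E m)) (Y : Set (E n)) (Z : Set ℝ)
    (G : E m → E n → ℝ → ℝ) : Prop :=
  ContDiffOn ℝ 2 (fun p : E m × E n × ℝ => G p.1 p.2.1 p.2.2)
    (closure X ×ˢ (closure Y ×ˢ closure Z)) ∧
  ∀ x ∈ closure X, ∀ y ∈ closure Y, ∀ z ∈ closure Z,
    Function.Injective (fun v : E n × ℝ =>
      ((fderiv ℝ (fun x' : E m =>
          (fderiv ℝ (fun q : E n × ℝ => G x' q.1 q.2) (y, z)) v) x : E m →L[ℝ] ℝ),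
       (fderiv ℝ (fun q : E n × ℝ => G x q.1 q.2) (y, z)) v))

/-- The map `x ↦ (G_y/G_z)(x,y,z)`. -/
def Ratio (G : E m → E n → ℝ → ℝ) (x : E m) (y : E n) (z : ℝ) : E n :=
  (Gz G x y z)⁻¹ • gradient (fun y' => G x y' z) y

/-- (G7): `x ↦ (G_y/G_z)(x,y,z)` is one-to-one on `X`. -/
def CondG7 (X : Set (E m)) (Y : Set (E n)) (Z : Set ℝ)
    (G : E m → E n → ℝ → ℝ) : Prop :=
  ∀ y ∈ closure Y, ∀ z ∈ closure Z, InjOn (fun x => Ratio G x y z) X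

/-- (G8): the range `(G_y/G_z)(X,y,z)` is convex. -/
def CondG8 (X : Set (E m)) (Y : Set (E n)) (Z : Set ℝ)
    (G : E m → E n → ℝ → ℝ) : Prop :=
  ∀ y ∈ closure Y, ∀ z ∈ closure Z, Convex ℝ ((fun x => Ratio G x y z) '' X)

/-- `ȳ_G` solves (3.2): for `u` `G`-convex and `x ∈ dom Du`,
`ȳ_G(x, u(x), Du(x))` is the unique `(y,z) ∈ cl(Y×Z)` with `u(x) = G(x,y,z)`
and `Du(x) = G_x(x,y,z)`.  We record the defining inverse property, together
with continuity (which holds under (G0)–(G1)). -/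
def IsYbar (X : Set (E m)) (Y : Set (E n)) (Z : Set ℝ)
    (G : E m → E n → ℝ → ℝ) (ybar : E m → ℝ → E m → E n × ℝ) : Prop :=
  (∀ x ∈ X, ∀ y ∈ closure Y, ∀ z ∈ closure Z,
    ybar x (G x y z) (Gx G x y z) = (y, z)) ∧
  ContinuousOn (fun p : E m × ℝ × E m => ybar p.1 p.2.1 p.2.2)
    {p : E m × ℝ × E m | ∃ x ∈ X, ∃ y ∈ closure Y, ∃ z ∈ closure Z,
      p = (x, G x y z, Gx G x y z)}

/-- A Borel probability measure on `X`, absolutely continuous with respect to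
`m`-dimensional Lebesgue measure. -/
def AdmissibleMeasure (X : Set (E m)) (μ : Measure (E m)) : Prop :=
  IsProbabilityMeasure μ ∧ μ ≪ (volume : Measure (E m)) ∧ μ Xᶜ = 0

/-- The principal's profit functional
`𝚷(u) = ∫_X π(x, ȳ_G(x, u(x), Du(x))) dμ(x)`. -/
def Profit (X : Set (E m)) (π : E m → E n → ℝ → ℝ)
    (ybar : E m → ℝ → E m → E n × ℝ) (μ : Measure (E m)) (u : E m → ℝ) : ℝ :=
  ∫ x in X, π x (ybar x (u x) (gradient u x)).1 (ybar x (u x) (gradient u x)).2 ∂μ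

/-- The squared `W^{1,2}(X,dμ)`-distance `‖u₁ - u₀‖²_{W^{1,2}(X,dμ)}`. -/
def WDistSq (X : Set (E m)) (μ : Measure (E m)) (u₀ u₁ : E m → ℝ) : ℝ :=
  ∫ x in X, ((u₁ x - u₀ x) ^ 2 + ‖gradient u₁ x - gradient u₀ x‖ ^ 2) ∂μ

/-- `u₀ = u₁` as elements of `W^{1,2}(X, dμ)`. -/
def WEq (X : Set (E m)) (μ : Measure (E m)) (u₀ u₁ : E m → ℝ) : Prop :=
  ∀ᵐ x ∂(μ.restrict X), u₀ x = u₁ x ∧ gradient u₀ x = gradient u₁ x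


/-- Proposition 3.5(b): assume (G0), (G4) and (G5).  Then a
continuous `u : X → ℝ` with `u ≥ u_∅ := G(·, y_∅, z_∅)` is `G`-convex iff there
is a lower semicontinuous price menu `v : cl Y → cl Z ⊆ [-∞,+∞]` with
`v(y_∅) ≤ z_∅` such that `u(x) = max_{y ∈ cl Y} G(x,y,v(y))`, the maximum being
attained.  `GE` denotes `G` extended to prices in `cl Z ⊆ EReal`, so that
`GE x y z̄ = lim_{z→z̄} G(x,y,z)` as in (G5). -/
theorem gconvex_iff_pricemenu_of_outsideOption
    {m n : ℕ} (X : Set (E m)) (Y : Set (E n)) (zl : ℝ) (zu : EReal)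
    (hzz : (zl : EReal) < zu) (Z : Set ℝ) (hZ : Z = priceSet zl zu)
    (hXo : IsOpen X) (hXb : Bornology.IsBounded X)
    (hYo : IsOpen Y) (hYb : Bornology.IsBounded Y)
    (G : E m → E n → ℝ → ℝ) (GE : E m → E n → EReal → ℝ)
    (hGE : ∀ x y, ∀ z : ℝ, GE x y (z : EReal) = G x y z)
    (hG0 : CondG0 X Y Z G) (hG4 : CondG4 X Y Z G)
    (y0 : E n) (z0 : ℝ)
    (hG5 : y0 ∈ closure Y ∧ z0 ∈ closure Z ∧
      (∀ x ∈ X, ∀ y ∈ closure Y,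
        Tendsto (fun z : ℝ => G x y z) (zFilter zu) (𝓝 (GE x y zu)) ∧
        GE x y zu ≤ G x y0 z0) ∧
      (zu = ⊤ → (∀ x ∈ X, ∀ y ∈ closure Y, GE x y zu < G x y0 z0) ∧
        ∃ zbig : ℝ, ∀ z : ℝ, zbig ≤ z → ∀ x ∈ X, ∀ y ∈ closure Y,
          G x y z < G x y0 z0))
    (u : E m → ℝ) (hu : ContinuousOn u X)
    (huge : ∀ x ∈ X, G x y0 z0 ≤ u x) :
    GConvex X Y Z G u ↔
      ∃ v : E n → EReal,
        LowerSemicontinuousOn v (closure Y) ∧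
        (∀ y ∈ closure Y, v y ∈ closure ((fun z : ℝ => (z : EReal)) '' Z)) ∧
        v y0 ≤ (z0 : EReal) ∧
        ∀ x ∈ X, ∃ y₀ ∈ closure Y, u x = GE x y₀ (v y₀) ∧
          ∀ y ∈ closure Y, GE x y (v y) ≤ GE x y₀ (v y₀) := by
  classical
  obtain ⟨hy0, hz0, hG5lim, hG5top⟩ := hG5
  -- Structure of `closure Z` and allied facts.
  have key : (∀ z : ℝ, (z ∈ closure Z ↔ zl ≤ z ∧ (z : EReal) ≤ zu)) ∧ Convex ℝ (closure Z) ∧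
      (zu = ⊤ → (⊤ : EReal) ∈ closure ((fun z : ℝ => (z : EReal)) '' Z)) := by
    rcases eq_or_ne zu ⊤ with rfl | hne
    · have hZ' : Z = Ioi zl := by
        rw [hZ]; ext z; simp [priceSet, EReal.coe_lt_top]
      have hcl : closure Z = Ici zl := by rw [hZ', closure_Ioi]
      refine ⟨?_, ?_, ?_⟩
      · intro z; rw [hcl]; simp [le_top]
      · rw [hcl]; exact convex_Ici zl
      · intro _
        refine mem_closure_of_tendsto (f := fun z : ℝ => (z : EReal)) (b := atTop) ?_ ?_
        · rw [EReal.tendsto_nhds_top_iff_real]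
          intro x
          filter_upwards [Filter.eventually_gt_atTop x] with z hz
          exact EReal.coe_lt_coe_iff.mpr hz
        · filter_upwards [Filter.eventually_gt_atTop zl] with z hz
          exact ⟨z, by rw [hZ']; exact hz, rfl⟩
    · have hbot : zu ≠ ⊥ := ne_bot_of_gt hzz
      obtain ⟨r, rfl⟩ : ∃ r : ℝ, (r : EReal) = zu := ⟨zu.toReal, EReal.coe_toReal hne hbot⟩
      have hr : zl < r := EReal.coe_lt_coe_iff.mp hzz
      have hZ' : Z = Ioo zl r := by
        rw [hZ]; ext z; simp [priceSet, EReal.coe_lt_coe_iff]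
      have hcl : closure Z = Icc zl r := by rw [hZ', closure_Ioo hr.ne]
      refine ⟨?_, ?_, ?_⟩
      · intro z; rw [hcl]; simp [EReal.coe_le_coe_iff, Icc]
      · rw [hcl]; exact convex_Icc zl r
      · intro h; exact absurd h (by simp)
  obtain ⟨hZmem, hZconv, htopcl⟩ := key
  -- basic continuity facts
  have hGcont : ContinuousOn (fun p : E m × E n × ℝ => G p.1 p.2.1 p.2.2)
      (closure X ×ˢ (closure Y ×ˢ closure Z)) := hG0.continuousOn
  have hconty : ∀ x ∈ X, ∀ z ∈ closure Z, ContinuousOn (fun y => G x y z) (closure Y) := by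
    intro x hx z hz
    exact hGcont.comp
      ((continuous_const.prodMk (continuous_id.prodMk continuous_const)).continuousOn)
      (fun y hy => ⟨subset_closure hx, hy, hz⟩)
  have hdiff : ∀ x ∈ X, ∀ y ∈ closure Y, ∀ z ∈ closure Z,
      DifferentiableAt ℝ (fun z' => G x y z') z :=
    fun x hx y hy z hz => differentiableAt_of_deriv_ne_zero (ne_of_lt (hG4 x hx y hy z hz))
  have hcontz : ∀ x ∈ X, ∀ y ∈ closure Y, ContinuousOn (fun z => G x y z) (closure Z) :=
    fun x hx y hy z hz => (hdiff x hx y hy z hz).continuousAt.continuousWithinAt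
  have hanti : ∀ x ∈ X, ∀ y ∈ closure Y, ∀ z₁ ∈ closure Z, ∀ z₂ ∈ closure Z, z₁ ≤ z₂ →
      G x y z₂ ≤ G x y z₁ := by
    intro x hx y hy z₁ h₁ z₂ h₂ hle
    rcases eq_or_lt_of_le hle with rfl | hlt
    · exact le_refl _
    · exact (strictAntiOn_of_deriv_neg hZconv (hcontz x hx y hy)
        (fun z hz => hG4 x hx y hy z (interior_subset hz)) h₁ h₂ hlt).le
  have himg : ∀ z ∈ closure Z, (z : EReal) ∈ closure ((fun z : ℝ => (z : EReal)) '' Z) :=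
    fun z hz => image_closure_subset_closure_image continuous_coe_real_ereal ⟨z, hz, rfl⟩
  constructor
  · -- forward direction
    intro hGc
    set T : E n → Set ℝ := fun y => {z | z ∈ closure Z ∧ ∀ x ∈ X, G x y z ≤ u x} with hTdef
    set v : E n → EReal :=
      fun y => if h : (T y).Nonempty then ((sInf (T y) : ℝ) : EReal) else zu with hvdef
    have hTbdd : ∀ y, BddBelow (T y) := fun y => ⟨zl, fun z hz => ((hZmem z).mp hz.1).1⟩
    have hTclosed : ∀ y ∈ closure Y, IsClosed (T y) := by
      intro y hy
      have hrw : T y = closure Z ∩ ⋂ x ∈ X, (closure Z ∩ (fun z => G x y z) ⁻¹' Iic (u x)) := by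
        ext z
        simp only [hTdef, mem_setOf_eq, mem_inter_iff, mem_iInter, mem_preimage, mem_Iic]
        constructor
        · rintro ⟨h1, h2⟩; exact ⟨h1, fun x hx => ⟨h1, h2 x hx⟩⟩
        · rintro ⟨h1, h2⟩; exact ⟨h1, fun x hx => (h2 x hx).2⟩
      rw [hrw]
      exact isClosed_closure.inter (isClosed_iInter fun x => isClosed_iInter fun hx =>
        (hcontz x hx y hy).preimage_isClosed_of_isClosed isClosed_closure isClosed_Iic)
    have hTval : ∀ y ∈ closure Y, ∀ h : (T y).Nonempty, sInf (T y) ∈ T y :=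
      fun y hy h => (hTclosed y hy).csInf_mem h (hTbdd y)
    have hvub : ∀ y ∈ closure Y, v y ≤ zu := by
      intro y hy
      by_cases h : (T y).Nonempty
      · simp only [hvdef, dif_pos h]
        exact ((hZmem _).mp (hTval y hy h).1).2
      · simp only [hvdef, dif_neg h]; exact le_refl _
    have hvlb : ∀ y ∈ closure Y, (zl : EReal) ≤ v y := by
      intro y hy
      by_cases h : (T y).Nonempty
      · simp only [hvdef, dif_pos h]
        exact EReal.coe_le_coe_iff.mpr ((hZmem _).mp (hTval y hy h).1).1
      · simp only [hvdef, dif_neg h]; exact hzz.le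
    refine ⟨v, ?_, ?_, ?_, ?_⟩
    · -- lower semicontinuity
      intro y hy b hb
      rcases lt_or_ge b (zl : EReal) with hblt | hble
      · filter_upwards [self_mem_nhdsWithin] with y' hy'
        exact lt_of_lt_of_le hblt (hvlb y' hy')
      · obtain ⟨c, hbc, hcv⟩ := exists_between hb
        have hcne_top : c ≠ ⊤ := hcv.ne_top
        have hcne_bot : c ≠ ⊥ := ne_bot_of_gt (lt_of_le_of_lt hble hbc)
        obtain ⟨cr, rfl⟩ : ∃ cr : ℝ, (cr : EReal) = c := ⟨c.toReal, EReal.coe_toReal hcne_top hcne_bot⟩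
        have hcrZ : cr ∈ closure Z := (hZmem cr).mpr
          ⟨(EReal.coe_lt_coe_iff.mp (lt_of_le_of_lt hble hbc)).le, hcv.le.trans (hvub y hy)⟩
        have hcr_notT : cr ∉ T y := by
          intro hmem
          have hne : (T y).Nonempty := ⟨cr, hmem⟩
          have hle : v y ≤ ((cr : ℝ) : EReal) := by
            simp only [hvdef, dif_pos hne]
            exact EReal.coe_le_coe_iff.mpr (csInf_le (hTbdd y) hmem)
          exact absurd hcv (not_lt.mpr hle)
        obtain ⟨x, hx, hux⟩ : ∃ x ∈ X, u x < G x y cr := by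
          by_contra hcon
          push_neg at hcon
          exact hcr_notT ⟨hcrZ, fun x hx => hcon x hx⟩
        have hev := ((hconty x hx cr hcrZ) y hy).eventually (eventually_gt_nhds hux)
        filter_upwards [hev, self_mem_nhdsWithin] with y' hGy' hy'
        by_cases h : (T y').Nonempty
        · have hm := hTval y' hy' h
          have hcrζ : cr < sInf (T y') := by
            by_contra hle
            push_neg at hle
            exact absurd (le_trans (hanti x hx y' hy' _ hm.1 cr hcrZ hle) (hm.2 x hx))
              (not_le.mpr hGy')
          have hlt : ((cr : ℝ) : EReal) < v y' := by
            simp only [hvdef, dif_pos h]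
            exact EReal.coe_lt_coe_iff.mpr hcrζ
          exact lt_trans hbc hlt
        · have hvy' : v y' = zu := by simp only [hvdef, dif_neg h]
          rw [hvy']
          exact lt_of_lt_of_le hbc ((hZmem cr).mp hcrZ).2
    · -- membership in closure of price set
      intro y hy
      by_cases h : (T y).Nonempty
      · simp only [hvdef, dif_pos h]
        exact himg _ (hTval y hy h).1
      · simp only [hvdef, dif_neg h]
        rcases eq_or_ne zu ⊤ with rfl | hne
        · exact htopcl rfl
        · have hbot : zu ≠ ⊥ := ne_bot_of_gt hzz
          obtain ⟨r, rfl⟩ : ∃ r : ℝ, (r : EReal) = zu := ⟨zu.toReal, EReal.coe_toReal hne hbot⟩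
          exact himg r ((hZmem r).mpr ⟨(EReal.coe_lt_coe_iff.mp hzz).le, le_refl _⟩)
    · -- v y0 ≤ z0
      have hz0T : z0 ∈ T y0 := ⟨hz0, fun x hx => huge x hx⟩
      have hne : (T y0).Nonempty := ⟨z0, hz0T⟩
      simp only [hvdef, dif_pos hne]
      exact EReal.coe_le_coe_iff.mpr (csInf_le (hTbdd y0) hz0T)
    · -- max attained
      intro x₀ hx₀
      obtain ⟨y₁, hy₁, z₁, hz₁, huz, hsupp⟩ := hGc x₀ hx₀
      have hz₁T : z₁ ∈ T y₁ := ⟨hz₁, hsupp⟩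
      have hTne : (T y₁).Nonempty := ⟨z₁, hz₁T⟩
      have hζmem := hTval y₁ hy₁ hTne
      have hζle : sInf (T y₁) ≤ z₁ := csInf_le (hTbdd y₁) hz₁T
      have hvy₁ : v y₁ = ((sInf (T y₁) : ℝ) : EReal) := by simp only [hvdef, dif_pos hTne]
      have hux : u x₀ = GE x₀ y₁ (v y₁) := by
        rw [hvy₁, hGE]
        refine le_antisymm ?_ (hζmem.2 x₀ hx₀)
        rw [huz]
        exact hanti x₀ hx₀ y₁ hy₁ _ hζmem.1 z₁ hz₁ hζle
      refine ⟨y₁, hy₁, hux, ?_⟩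
      intro y hy
      rw [← hux]
      by_cases h : (T y).Nonempty
      · have hm := hTval y hy h
        simp only [hvdef, dif_pos h, hGE]
        exact hm.2 x₀ hx₀
      · simp only [hvdef, dif_neg h]
        exact le_trans (hG5lim x₀ hx₀ y hy).2 (huge x₀ hx₀)
  · -- reverse direction
    rintro ⟨v, hlsc, hmemv, hvy0, hmax⟩
    intro x₀ hx₀
    obtain ⟨y₁, hy₁, huz, hsupp⟩ := hmax x₀ hx₀
    have hIcc : closure ((fun z : ℝ => (z : EReal)) '' Z) ⊆ Icc (zl : EReal) zu := by
      refine closure_minimal ?_ isClosed_Icc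
      rintro _ ⟨z, hzZ, rfl⟩
      rw [hZ] at hzZ
      exact ⟨EReal.coe_le_coe_iff.mpr hzZ.1.le, hzZ.2.le⟩
    have hv1 := hIcc (hmemv y₁ hy₁)
    rcases eq_or_ne (v y₁) ⊤ with htp | hnt
    · exfalso
      have hzutop : zu = ⊤ := top_le_iff.mp (htp ▸ hv1.2)
      obtain ⟨hstrict, -⟩ := hG5top hzutop
      have h1 := hstrict x₀ hx₀ y₁ hy₁
      rw [hzutop, ← htp, ← huz] at h1
      exact absurd (huge x₀ hx₀) (not_le.mpr h1)
    · have hnb : v y₁ ≠ ⊥ := ne_bot_of_le_ne_bot (by simp) hv1.1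
      have hζ : (((v y₁).toReal : ℝ) : EReal) = v y₁ := EReal.coe_toReal hnt hnb
      have hζZ : (v y₁).toReal ∈ closure Z := by
        refine (hZmem _).mpr ⟨EReal.coe_le_coe_iff.mp ?_, ?_⟩
        · rw [hζ]; exact hv1.1
        · rw [hζ]; exact hv1.2
      refine ⟨y₁, hy₁, (v y₁).toReal, hζZ, ?_, ?_⟩
      · rw [huz, ← hGE, hζ]
      · intro x hx
        obtain ⟨y₂, hy₂, huz₂, hsupp₂⟩ := hmax x hx
        have h2 := hsupp₂ y₁ hy₁
        rw [← huz₂] at h2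
        rw [← hGE, hζ]
        exact h2

end PrincipalAgent
end
end

section
/- Assume (G4). A measurable map x ∈ X ↦ (y(x), z(x)) ∈ cl(Y×Z) is incentive compatible if and only if the function u(x) := G(x, y(x), z(x)) is G-convex on X and y(x) ∈ ∂^G u(x) for every x ∈ X. -/
/-!
Common framework for "The principal-agent problem: convexity/concavity of the
principal's problem" (McCann–Zhang).

Agent types live in `X ⊆ ℝ^m`, product types in `Y ⊆ ℝ^n`, prices in
`Z = (z̲, z̄) ⊆ ℝ` with `z̲` finite and `z̄ ∈ (z̲, +∞]` (an `EReal`).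
The direct utility is `G(x,y,z)` and the principal's profit density `π(x,y,z)`.
-/

open Set MeasureTheory Filter Topology

noncomputable section

namespace PrincipalAgent

variable {m n : ℕ}

/-- The price set is convex. -/
lemma priceSet_convex (zl : ℝ) (zu : EReal) : Convex ℝ (priceSet zl zu) := by
  have : OrdConnected (priceSet zl zu) := by
    constructor
    rintro a ⟨ha1, ha2⟩ b ⟨hb1, hb2⟩ c ⟨hc1, hc2⟩
    exact ⟨lt_of_lt_of_le ha1 hc1,
      lt_of_le_of_lt (EReal.coe_le_coe_iff.mpr hc2) hb2⟩
  exact this.convex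

/-- Under (G4), `z ↦ G x y z` is injective on `closure Z`. -/
lemma gz_injOn {m n : ℕ} (X : Set (E m)) (Y : Set (E n)) (zl : ℝ) (zu : EReal)
    (Z : Set ℝ) (hZ : Z = priceSet zl zu)
    (G : E m → E n → ℝ → ℝ) (hG4 : CondG4 X Y Z G)
    (x : E m) (hx : x ∈ X) (yy : E n) (hy : yy ∈ closure Y) :
    Set.InjOn (fun zz => G x yy zz) (closure Z) := by
  have hconv : Convex ℝ (closure Z) := by
    rw [hZ]; exact (priceSet_convex zl zu).closure
  have hderiv : ∀ zz ∈ closure Z, deriv (fun z' => G x yy z') zz < 0 :=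
    fun zz hz => hG4 x hx yy hy zz hz
  have hdiff : ∀ zz ∈ closure Z, DifferentiableAt ℝ (fun z' => G x yy z') zz :=
    fun zz hz => differentiableAt_of_deriv_ne_zero (ne_of_lt (hderiv zz hz))
  have hcont : ContinuousOn (fun z' => G x yy z') (closure Z) :=
    fun zz hz => (hdiff zz hz).continuousAt.continuousWithinAt
  have hanti : StrictAntiOn (fun z' => G x yy z') (closure Z) :=
    strictAntiOn_of_deriv_neg hconv hcont
      (fun zz hz => hderiv zz (interior_subset hz))
  exact hanti.injOn

/-- Lemma 3.7: assume (G4).  A measurable map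
`x ∈ X ↦ (y(x), z(x)) ∈ cl(Y × Z)` is incentive compatible iff
`u(x) := G(x, y(x), z(x))` is `G`-convex on `X` and `y(x) ∈ ∂^G u(x)` for every
`x ∈ X`. -/
theorem incentiveCompatible_iff_gconvex
    {m n : ℕ} (X : Set (E m)) (Y : Set (E n)) (zl : ℝ) (zu : EReal)
    (hzz : (zl : EReal) < zu) (Z : Set ℝ) (hZ : Z = priceSet zl zu)
    (hXo : IsOpen X) (hXb : Bornology.IsBounded X)
    (hYo : IsOpen Y) (hYb : Bornology.IsBounded Y)
    (G : E m → E n → ℝ → ℝ)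
    (hG4 : CondG4 X Y Z G)
    (y : E m → E n) (z : E m → ℝ)
    (hymeas : Measurable y) (hzmeas : Measurable z)
    (hrange : ∀ x ∈ X, y x ∈ closure Y ∧ z x ∈ closure Z) :
    (∀ x ∈ X, ∀ x' ∈ X, G x (y x') (z x') ≤ G x (y x) (z x)) ↔
      (GConvex X Y Z G (fun x => G x (y x) (z x)) ∧
        ∀ x ∈ X, y x ∈ GSubdiff X Y Z G (fun x' => G x' (y x') (z x')) x) := by
  constructor
  · intro hIC
    refine ⟨?_, ?_⟩
    · intro x₀ hx₀
      exact ⟨y x₀, (hrange x₀ hx₀).1, z x₀, (hrange x₀ hx₀).2, rfl,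
        fun x hx => hIC x hx x₀ hx₀⟩
    · intro x hx
      exact ⟨(hrange x hx).1, z x, (hrange x hx).2, rfl,
        fun x' hx' => hIC x' hx' x hx⟩
  · rintro ⟨-, hsub⟩ x hx x' hx'
    obtain ⟨hyY, z', hz'Z, heq, hle⟩ := hsub x' hx'
    have hzz' : z' = z x' :=
      gz_injOn X Y zl zu Z hZ G hG4 x' hx' (y x') hyY hz'Z (hrange x' hx').2 heq
    calc G x (y x') (z x') = G x (y x') z' := by rw [hzz']
      _ ≤ G x (y x) (z x) := hle x hx

end PrincipalAgent
end
end

section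
/- Assume (G0), (G4) and z̄ < +∞. If (u_k) is a sequence of G-convex functions on X converging uniformly on X to a function u_∞, then u_∞ is G-convex. -/
/-!
Common framework for "The principal-agent problem: convexity/concavity of the
principal's problem" (McCann–Zhang).

Agent types live in `X ⊆ ℝ^m`, product types in `Y ⊆ ℝ^n`, prices in
`Z = (z̲, z̄) ⊆ ℝ` with `z̲` finite and `z̄ ∈ (z̲, +∞]` (an `EReal`).
The direct utility is `G(x,y,z)` and the principal's profit density `π(x,y,z)`.
-/

open Set MeasureTheory Filter Topology

noncomputable section

namespace PrincipalAgent

variable {m n : ℕ}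

/-- steps 4.3–4.6 of the proof of Theorem 3.9: assume (G0),
(G4) and `z̄ < +∞`.  If a sequence `(u_k)` of `G`-convex functions converges
uniformly on `X` to `u_∞`, then `u_∞` is `G`-convex. -/
theorem gconvex_of_tendstoUniformlyOn
    {m n : ℕ} (X : Set (E m)) (Y : Set (E n)) (zl zu : ℝ)
    (hzz : zl < zu) (Z : Set ℝ) (hZ : Z = Ioo zl zu)
    (hXo : IsOpen X) (hXb : Bornology.IsBounded X)
    (hYo : IsOpen Y) (hYb : Bornology.IsBounded Y)
    (G : E m → E n → ℝ → ℝ)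
    (hG0 : CondG0 X Y Z G) (hG4 : CondG4 X Y Z G)
    (u : ℕ → E m → ℝ) (hu : ∀ k, GConvex X Y Z G (u k))
    (uinf : E m → ℝ)
    (hconv : TendstoUniformlyOn u uinf atTop X) :
    GConvex X Y Z G uinf := by
  intro x₀ hx₀
  choose y hy z hz heq hle using fun k => hu k x₀ hx₀
  have hYc : IsCompact (closure Y) := hYb.isCompact_closure
  have hZc : IsCompact (closure Z) := by
    rw [hZ]
    exact (Bornology.IsBounded.isCompact_closure (Metric.isBounded_Ioo zl zu))
  have hK : IsCompact (closure Y ×ˢ closure Z) := hYc.prod hZc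
  have hmem : ∀ k, (y k, z k) ∈ closure Y ×ˢ closure Z := fun k => ⟨hy k, hz k⟩
  obtain ⟨p₀, hp₀, φ, hφ, hlim⟩ := hK.tendsto_subseq hmem
  refine ⟨p₀.1, hp₀.1, p₀.2, hp₀.2, ?_, ?_⟩
  · -- uinf x₀ = G x₀ p₀.1 p₀.2
    have h1 : Tendsto (fun j => u (φ j) x₀) atTop (𝓝 (uinf x₀)) :=
      (hconv.tendsto_at hx₀).comp hφ.tendsto_atTop
    have h2 : Tendsto (fun j => G x₀ (y (φ j)) (z (φ j))) atTop (𝓝 (G x₀ p₀.1 p₀.2)) := by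
      have hq : ((x₀, p₀.1, p₀.2) : E m × E n × ℝ) ∈
          closure X ×ˢ (closure Y ×ˢ closure Z) := ⟨subset_closure hx₀, hp₀⟩
      have hc := (hG0.continuousOn (x₀, p₀.1, p₀.2) hq)
      have hseq : Tendsto (fun j => ((x₀, y (φ j), z (φ j)) : E m × E n × ℝ)) atTop
          (𝓝[closure X ×ˢ (closure Y ×ˢ closure Z)] (x₀, p₀.1, p₀.2)) := by
        apply tendsto_nhdsWithin_of_tendsto_nhds_of_eventually_within
        · exact (tendsto_const_nhds.prodMk_nhds hlim)
        · exact Filter.Eventually.of_forall fun j => ⟨subset_closure hx₀, hmem (φ j)⟩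
      exact hc.tendsto.comp hseq
    have : (fun j => u (φ j) x₀) = fun j => G x₀ (y (φ j)) (z (φ j)) := by
      funext j; exact heq (φ j)
    rw [this] at h1
    exact tendsto_nhds_unique h1 h2
  · intro x hx
    have h1 : Tendsto (fun j => u (φ j) x) atTop (𝓝 (uinf x)) :=
      (hconv.tendsto_at hx).comp hφ.tendsto_atTop
    have h2 : Tendsto (fun j => G x (y (φ j)) (z (φ j))) atTop (𝓝 (G x p₀.1 p₀.2)) := by
      have hq : ((x, p₀.1, p₀.2) : E m × E n × ℝ) ∈
          closure X ×ˢ (closure Y ×ˢ closure Z) := ⟨subset_closure hx, hp₀⟩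
      have hc := (hG0.continuousOn (x, p₀.1, p₀.2) hq)
      have hseq : Tendsto (fun j => ((x, y (φ j), z (φ j)) : E m × E n × ℝ)) atTop
          (𝓝[closure X ×ˢ (closure Y ×ˢ closure Z)] (x, p₀.1, p₀.2)) := by
        apply tendsto_nhdsWithin_of_tendsto_nhds_of_eventually_within
        · exact (tendsto_const_nhds.prodMk_nhds hlim)
        · exact Filter.Eventually.of_forall fun j => ⟨subset_closure hx, hmem (φ j)⟩
      exact hc.tendsto.comp hseq
    exact le_of_tendsto_of_tendsto' h2 h1 fun j => hle (φ j) x hx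


end PrincipalAgent
end
end

section
/- Assume (G0), (G1), (G4), (G5), z̄ < +∞, and let μ be a Borel probability measure on X with μ ≪ L^m. Define Π̃(u,y) := ∫_X π(x, y(x), H(x, y(x), u(x))) dμ(x). Then the maximum of Π̃(u,y) over all G-convex functions u : X → ℝ with u ≥ u_∅ and all measurable selections y(x) ∈ ∂^G u(x) (x ∈ X) is attained; moreover, for each such u the selection y(x) is uniquely determined for Lebesgue-almost every x ∈ X. -/
/-!
Common framework for "The principal-agent problem: convexity/concavity of the
principal's problem" (McCann–Zhang).

Agent types live in `X ⊆ ℝ^m`, product types in `Y ⊆ ℝ^n`, prices in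
`Z = (z̲, z̄) ⊆ ℝ` with `z̲` finite and `z̄ ∈ (z̲, +∞]` (an `EReal`).
The direct utility is `G(x,y,z)` and the principal's profit density `π(x,y,z)`.
-/

open Set MeasureTheory Filter Topology
open scoped NNReal

noncomputable section

namespace PrincipalAgent

variable {m n : ℕ}

lemma MZ.tendsto_of_unique_clusterPt {α : Type*} [TopologicalSpace α]
    {K : Set α} (hK : IsCompact K) {f : ℕ → α} (hf : ∀ k, f k ∈ K) {a : α}
    (h : ∀ b, MapClusterPt b atTop f → b = a) : Tendsto f atTop (𝓝 a) := by
  by_contra hcon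
  obtain ⟨U, hU, hfreq⟩ : ∃ U ∈ 𝓝 a, ∃ᶠ k in atTop, f k ∉ U := by
    rw [tendsto_iff_forall_eventually_mem] at hcon
    push_neg at hcon
    obtain ⟨U, hU, h2⟩ := hcon
    exact ⟨U, hU, h2⟩
  obtain ⟨V, hVU, hVo, haV⟩ := mem_nhds_iff.1 hU
  have hfreq' : ∃ᶠ k in atTop, f k ∈ Vᶜ ∩ K :=
    hfreq.mono fun k hk => ⟨fun hV => hk (hVU hV), hf k⟩
  set l : Filter ℕ := atTop ⊓ 𝓟 {k | f k ∈ Vᶜ ∩ K} with hl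
  have hlne : l.NeBot := by
    rw [hl, inf_principal_neBot_iff]
    intro s hs
    exact ((hfreq'.and_eventually hs).exists).imp fun k hk => ⟨hk.2, hk.1⟩
  have hle : map f l ≤ 𝓟 (Vᶜ ∩ K) := by
    rw [map_le_iff_le_comap, comap_principal]
    exact le_trans inf_le_right (principal_mono.2 fun k hk => hk)
  have hKVc : IsCompact (Vᶜ ∩ K) := hK.inter_left hVo.isClosed_compl
  obtain ⟨b, hb, hbcl⟩ := hKVc hle
  have hmcp : MapClusterPt b atTop f := hbcl.mono (map_mono inf_le_left)
  exact hb.1 (h b hmcp ▸ haV)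



lemma MZ.exists_subseq_tendsto {ι : Type*} [Countable ι] {M : ℝ}
    (f : ℕ → ι → ℝ) (hf : ∀ k i, |f k i| ≤ M) :
    ∃ φ : ℕ → ℕ, StrictMono φ ∧ ∀ i, ∃ L : ℝ, Tendsto (fun k => f (φ k) i) atTop (𝓝 L) := by
  let Q := ι → Icc (-M) M
  have : ∀ k i, f k i ∈ Icc (-M) M := fun k i => abs_le.1 (hf k i) |>.imp id id
  let F : ℕ → Q := fun k i => ⟨f k i, this k i⟩
  haveI : CompactSpace Q := by infer_instance
  haveI : TopologicalSpace.PseudoMetrizableSpace Q := by infer_instance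
  obtain ⟨a, φ, hφ, hconv⟩ := CompactSpace.tendsto_subseq F
  refine ⟨φ, hφ, fun i => ⟨(a i : ℝ), ?_⟩⟩
  have h1 : Tendsto (fun k => F (φ k) i) atTop (𝓝 (a i)) := by
    have := tendsto_pi_nhds.1 hconv i
    exact this
  exact ((continuous_subtype_val.tendsto (a i)).comp h1 : _)

lemma MZ.exists_ext {α : Type*} [TopologicalSpace α] [NormalSpace α] {s : Set α}
    (hs : IsClosed s) {f : α → ℝ} (hf : ContinuousOn f s) :
    ∃ g : α → ℝ, Continuous g ∧ ∀ x ∈ s, g x = f x := by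
  obtain ⟨g, hg⟩ := ContinuousMap.exists_restrict_eq hs ⟨s.restrict f, hf.restrict⟩
  refine ⟨g, g.continuous, fun x hx => ?_⟩
  have := congrFun (congrArg ContinuousMap.toFun hg) ⟨x, hx⟩
  have h2 : g x = s.restrict f ⟨x, hx⟩ := by simpa using this
  exact h2





lemma MZ.sliceDiff {X : Set (E m)} (hXo : IsOpen X) {W : Set (E n × ℝ)}
    {g : E m × (E n × ℝ) → ℝ} (hg : ContDiffOn ℝ 1 g (closure X ×ˢ W))
    {x : E m} (hx : x ∈ X) {p : E n × ℝ} (hp : p ∈ W) :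
    DifferentiableAt ℝ (fun x' => g (x', p)) x := by
  have h1 : DifferentiableWithinAt ℝ g (closure X ×ˢ W) (x, p) :=
    (hg.differentiableOn one_ne_zero) (x, p) ⟨subset_closure hx, hp⟩
  have h2 : DifferentiableWithinAt ℝ (fun x' : E m => (x', p)) ((fun x' : E m => (x', p)) ⁻¹' (closure X ×ˢ W)) x :=
    (DifferentiableAt.prodMk differentiableAt_id (differentiableAt_const p)).differentiableWithinAt
  have h3 : DifferentiableWithinAt ℝ (fun x' => g (x', p))
      ((fun x' : E m => (x', p)) ⁻¹' (closure X ×ˢ W)) x :=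
    h1.comp x h2 (mapsTo_preimage _ _)
  refine h3.differentiableAt (Filter.mem_of_superset (hXo.mem_nhds hx) ?_)
  intro y hy
  exact ⟨subset_closure hy, hp⟩

lemma MZ.slice_lipschitz {X : Set (E m)} (hXo : IsOpen X) {W : Set (E n × ℝ)}
    (hW : IsCompact W) {g : E m × (E n × ℝ) → ℝ}
    (hg : ContDiffOn ℝ 1 g (closure X ×ˢ W)) {x₀ : E m} (hx₀ : x₀ ∈ X) :
    ∃ r > 0, Metric.closedBall x₀ r ⊆ X ∧
      ∃ C : ℝ≥0, ∀ p ∈ W, LipschitzOnWith C (fun x => g (x, p)) (Metric.closedBall x₀ r) := by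
  obtain ⟨ε, hε, hball⟩ := Metric.isOpen_iff.1 hXo x₀ hx₀
  have hr : (0:ℝ) < ε/2 := by linarith
  have hsub : Metric.closedBall x₀ (ε/2) ⊆ X :=
    (Metric.closedBall_subset_ball (by linarith)).trans hball
  set S : Set (E m × (E n × ℝ)) := closure X ×ˢ W with hS
  set T : Set (E m) := Metric.closedBall x₀ (ε/2) with hT
  -- local derivative bound claim
  have claim : ∀ q ∈ T ×ˢ W, ∃ O : Set (E m × (E n × ℝ)), IsOpen O ∧ q ∈ O ∧ ∃ Cq : ℝ,
      ∀ z ∈ S ∩ O, z.1 ∈ X → ‖fderiv ℝ (fun x' => g (x', z.2)) z.1‖ ≤ Cq := by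
    rintro q ⟨hq1, hq2⟩
    have hqS : q ∈ S := ⟨subset_closure (hsub hq1), hq2⟩
    have hq := hg q hqS
    rw [← zero_add (1 : WithTop ℕ∞)] at hq
    rw [contDiffWithinAt_succ_iff_hasFDerivWithinAt (by simp)] at hq
    obtain ⟨u, hu, -, f', hf'deriv, hf'cont⟩ := hq
    rw [insert_eq_of_mem hqS] at hu
    obtain ⟨O₁, hO₁o, hqO₁, hO₁sub⟩ := mem_nhdsWithin.1 hu
    have hcont : ContinuousWithinAt f' u q := hf'cont.continuousWithinAt
    have hev : ∀ᶠ z in 𝓝[u] q, ‖f' z‖ < ‖f' q‖ + 1 := by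
      have : Metric.ball (f' q) 1 ∈ 𝓝 (f' q) := Metric.ball_mem_nhds _ one_pos
      filter_upwards [hcont (this)] with z hz
      have := mem_ball_iff_norm.1 hz
      have heq : f' q + (f' z - f' q) = f' z := by abel
      calc ‖f' z‖ = ‖f' q + (f' z - f' q)‖ := by rw [heq]
        _ ≤ ‖f' q‖ + ‖f' z - f' q‖ := norm_add_le _ _
        _ < ‖f' q‖ + 1 := by linarith
    obtain ⟨O₂, hO₂o, hqO₂, hO₂sub⟩ := mem_nhdsWithin.1 hev
    refine ⟨O₁ ∩ O₂, hO₁o.inter hO₂o, ⟨hqO₁, hqO₂⟩, ‖f' q‖ + 1, ?_⟩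
    rintro ⟨x, p⟩ ⟨hzS, hzO₁, hzO₂⟩ hxX
    have hzu : (x, p) ∈ u := hO₁sub ⟨hzO₁, hzS⟩
    have hderiv : HasFDerivWithinAt g (f' (x, p)) (S ∩ (O₁ ∩ O₂)) (x, p) :=
      (hf'deriv _ hzu).mono (fun w hw => hO₁sub ⟨hw.2.1, hw.1⟩)
    set ι : (E m) →L[ℝ] (E m × (E n × ℝ)) :=
      (ContinuousLinearMap.id ℝ (E m)).prod (0 : (E m) →L[ℝ] (E n × ℝ)) with hι
    have hι' : HasFDerivWithinAt (fun x' : E m => (x', p)) ι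
        ((fun x' : E m => (x', p)) ⁻¹' (S ∩ (O₁ ∩ O₂))) x :=
      (HasFDerivAt.prodMk (hasFDerivAt_id x) (hasFDerivAt_const p x)).hasFDerivWithinAt
    have hcomp : HasFDerivWithinAt (fun x' => g (x', p)) ((f' (x, p)).comp ι)
        ((fun x' : E m => (x', p)) ⁻¹' (S ∩ (O₁ ∩ O₂))) x :=
      hderiv.comp x hι' (mapsTo_preimage _ _)
    have hmem : ((fun x' : E m => (x', p)) ⁻¹' (S ∩ (O₁ ∩ O₂))) ∈ 𝓝 x := by
      have hopen : IsOpen (X ∩ (fun x' : E m => (x', p)) ⁻¹' (O₁ ∩ O₂)) :=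
        hXo.inter ((hO₁o.inter hO₂o).preimage (continuous_id.prodMk continuous_const))
      refine Filter.mem_of_superset (hopen.mem_nhds ⟨hxX, hzO₁, hzO₂⟩) ?_
      rintro y ⟨hy1, hy2⟩
      exact ⟨⟨subset_closure hy1, hzS.2⟩, hy2⟩
    have hat : HasFDerivAt (fun x' => g (x', p)) ((f' (x, p)).comp ι) x :=
      hcomp.hasFDerivAt hmem
    rw [hat.fderiv]
    have hbound : ‖f' (x, p)‖ < ‖f' q‖ + 1 := hO₂sub ⟨hzO₂, hzu⟩
    have hιnorm : ‖ι‖ ≤ 1 := by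
      refine ContinuousLinearMap.opNorm_le_bound _ zero_le_one fun v => ?_
      rw [one_mul]
      simp [hι, Prod.norm_def]
    calc ‖(f' (x, p)).comp ι‖ ≤ ‖f' (x, p)‖ * ‖ι‖ := ContinuousLinearMap.opNorm_comp_le _ _
      _ ≤ (‖f' q‖ + 1) * 1 := by
          apply mul_le_mul (le_of_lt hbound) hιnorm (norm_nonneg _) (by positivity)
      _ = ‖f' q‖ + 1 := mul_one _
  -- extract a finite subcover
  have hTW : IsCompact (T ×ˢ W) := (isCompact_closedBall _ _).prod hW
  choose O hOopen hqO Cq hCq using claim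
  obtain ⟨t, ht⟩ := hTW.elim_nhds_subcover' (fun q hq => O q hq)
    (fun q hq => (hOopen q hq).mem_nhds (hqO q hq))
  set C : ℝ≥0 := t.sup fun q => Real.toNNReal (Cq q q.2) with hC
  refine ⟨ε/2, hr, hsub, C, fun p hp => ?_⟩
  have hdiff : ∀ x ∈ T, DifferentiableAt ℝ (fun x' => g (x', p)) x :=
    fun x hx => MZ.sliceDiff hXo hg (hsub hx) hp
  refine (convex_closedBall x₀ (ε/2)).lipschitzOnWith_of_nnnorm_fderiv_le hdiff (fun x hx => ?_)
  have hmem : (x, p) ∈ T ×ˢ W := ⟨hx, hp⟩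
  obtain ⟨q, hqt, hxq⟩ : ∃ q ∈ t, (x, p) ∈ O q q.2 := by
    have := ht hmem
    simp only [mem_iUnion] at this
    obtain ⟨q, hq, hmemO⟩ := this
    exact ⟨q, hq, hmemO⟩
  have hb : ‖fderiv ℝ (fun x' => g (x', p)) x‖ ≤ Cq q q.2 := by
    have := hCq q q.2 (x, p) ⟨⟨subset_closure (hsub hx), hp⟩, hxq⟩ (hsub hx)
    exact this
  have : ‖fderiv ℝ (fun x' => g (x', p)) x‖₊ ≤ Real.toNNReal (Cq q q.2) := by
    rw [← NNReal.coe_le_coe, coe_nnnorm]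
    exact hb.trans (Real.le_coe_toNNReal _)
  exact this.trans (Finset.le_sup (f := fun q : ↥(T ×ˢ W) => Real.toNNReal (Cq ↑q q.2)) hqt)

lemma MZ.uLip {X : Set (E m)} (hXo : IsOpen X) {W : Set (E n × ℝ)}
    (hW : IsCompact W) {g : E m × (E n × ℝ) → ℝ}
    (hg : ContDiffOn ℝ 1 g (closure X ×ˢ W)) {u : E m → ℝ}
    (hu : ∀ x ∈ X, ∃ p ∈ W, g (x, p) = u x ∧ ∀ x' ∈ X, g (x', p) ≤ u x')
    {x₀ : E m} (hx₀ : x₀ ∈ X) :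
    ∃ r > 0, Metric.closedBall x₀ r ⊆ X ∧ ∃ C : ℝ≥0,
      LipschitzOnWith C u (Metric.closedBall x₀ r) := by
  obtain ⟨r, hr, hsub, C, hC⟩ := MZ.slice_lipschitz hXo hW hg hx₀
  refine ⟨r, hr, hsub, C, ?_⟩
  rw [lipschitzOnWith_iff_dist_le_mul]
  intro x hx y hy
  rw [Real.dist_eq, abs_sub_le_iff]
  have key : ∀ a ∈ Metric.closedBall x₀ r, ∀ b ∈ Metric.closedBall x₀ r,
      u a - u b ≤ ↑C * dist a b := by
    intro a ha b hb
    obtain ⟨p, hpW, hpe, hps⟩ := hu a (hsub ha)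
    have h1 : u a - u b ≤ g (a, p) - g (b, p) := by
      have := hps b (hsub hb)
      linarith [hpe]
    have h2 : g (a, p) - g (b, p) ≤ dist (g (a, p)) (g (b, p)) := by
      rw [Real.dist_eq]
      exact le_abs_self _
    have h3 := lipschitzOnWith_iff_dist_le_mul.1 (hC p hpW) a ha b hb
    linarith
  constructor
  · exact key x hx y hy
  · have := key y hy x hx
    rwa [dist_comm] at this

lemma MZ.continuousOn_of_supports {X : Set (E m)} (hXo : IsOpen X) {W : Set (E n × ℝ)}
    (hW : IsCompact W) {g : E m × (E n × ℝ) → ℝ}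
    (hg : ContDiffOn ℝ 1 g (closure X ×ˢ W)) {u : E m → ℝ}
    (hu : ∀ x ∈ X, ∃ p ∈ W, g (x, p) = u x ∧ ∀ x' ∈ X, g (x', p) ≤ u x') :
    ContinuousOn u X := by
  intro x₀ hx₀
  obtain ⟨r, hr, hsub, C, hC⟩ := MZ.uLip hXo hW hg hu hx₀
  exact (hC.continuousOn x₀ (Metric.mem_closedBall_self hr.le)).mono_of_mem_nhdsWithin
    (nhdsWithin_le_nhds (Metric.closedBall_mem_nhds x₀ hr)) |>.continuousAt
    (Metric.closedBall_mem_nhds x₀ hr) |>.continuousWithinAt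

lemma MZ.ae_diff_of_supports {X : Set (E m)} (hXo : IsOpen X) {W : Set (E n × ℝ)}
    (hW : IsCompact W) {g : E m × (E n × ℝ) → ℝ}
    (hg : ContDiffOn ℝ 1 g (closure X ×ˢ W)) {u : E m → ℝ}
    (hu : ∀ x ∈ X, ∃ p ∈ W, g (x, p) = u x ∧ ∀ x' ∈ X, g (x', p) ≤ u x') :
    ∀ᵐ x ∂(volume : Measure (E m)), x ∈ X → DifferentiableAt ℝ u x := by
  choose r hr hsub C hC using fun (i : ↥X) => MZ.uLip hXo hW hg hu i.2
  obtain ⟨T, hTc, hTeq⟩ := TopologicalSpace.isOpen_iUnion_countable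
    (fun i : ↥X => Metric.ball (i : E m) (r i)) (fun i => Metric.isOpen_ball)
  have hae : ∀ i : ↥X, ∀ᵐ x ∂(volume : Measure (E m)),
      x ∈ Metric.ball (i : E m) (r i) → DifferentiableAt ℝ u x := by
    intro i
    have hlip : LipschitzOnWith (C i) u (Metric.ball (i : E m) (r i)) :=
      (hC i).mono Metric.ball_subset_closedBall
    filter_upwards [hlip.ae_differentiableWithinAt_of_mem] with x hx hxb
    exact (hx hxb).differentiableAt (Metric.isOpen_ball.mem_nhds hxb)
  have hae2 : ∀ᵐ x ∂(volume : Measure (E m)), ∀ i ∈ T,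
      x ∈ Metric.ball (i : E m) (r i) → DifferentiableAt ℝ u x :=
    (ae_ball_iff hTc).2 fun i _ => hae i
  filter_upwards [hae2] with x hx hxX
  have hxmem : x ∈ ⋃ i : ↥X, Metric.ball (i : E m) (r i) :=
    mem_iUnion.2 ⟨⟨x, hxX⟩, Metric.mem_ball_self (hr ⟨x, hxX⟩)⟩
  rw [← hTeq] at hxmem
  obtain ⟨i, hiT, hxi⟩ := mem_iUnion₂.1 hxmem
  exact hx i hiT hxi


lemma MZ.support_unique {X : Set (E m)} {Y : Set (E n)} {Z : Set ℝ}
    {G : E m → E n → ℝ → ℝ} (hXo : IsOpen X)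
    (hG0 : CondG0 X Y Z G) (hG1 : CondG1 X Y Z G) {u : E m → ℝ} {x : E m}
    (hx : x ∈ X) (hd : DifferentiableAt ℝ u x) {p q : E n × ℝ}
    (hp : p ∈ closure Y ×ˢ closure Z) (hq : q ∈ closure Y ×ˢ closure Z)
    (hpe : G x p.1 p.2 = u x) (hqe : G x q.1 q.2 = u x)
    (hps : ∀ x' ∈ X, G x' p.1 p.2 ≤ u x') (hqs : ∀ x' ∈ X, G x' q.1 q.2 ≤ u x') :
    p = q := by
  have key : ∀ pp ∈ closure Y ×ˢ closure Z, G x pp.1 pp.2 = u x →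
      (∀ x' ∈ X, G x' pp.1 pp.2 ≤ u x') →
      Phi G x pp = ((InnerProductSpace.toDual ℝ (E m)).symm (fderiv ℝ u x), u x) := by
    intro pp hpp hppe hpps
    have hdiff_s : DifferentiableAt ℝ (fun x' => G x' pp.1 pp.2) x :=
      MZ.sliceDiff (W := closure Y ×ˢ closure Z)
        (g := fun q : E m × (E n × ℝ) => G q.1 q.2.1 q.2.2) hXo hG0 hx hpp
    have hmin : IsLocalMin (fun x' => u x' - G x' pp.1 pp.2) x := by
      have : ∀ᶠ x' in 𝓝 x, x' ∈ X := hXo.mem_nhds hx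
      filter_upwards [this] with x' hx'
      have := hpps x' hx'
      simp only [hppe]
      linarith
    have hfz : fderiv ℝ (fun x' => u x' - G x' pp.1 pp.2) x = 0 := hmin.fderiv_eq_zero
    rw [fderiv_fun_sub hd hdiff_s, sub_eq_zero] at hfz
    simp only [Phi, Gx, gradient]
    exact Prod.ext (by rw [← hfz]) hppe
  have h1 := key p hp hpe hps
  have h2 := key q hq hqe hqs
  exact (hG1 x hx).2.1 hp hq (h1.trans h2.symm)

lemma MZ.part2 {X : Set (E m)} {Y : Set (E n)} {Z : Set ℝ}
    {G : E m → E n → ℝ → ℝ} (hXo : IsOpen X)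
    (hWc : IsCompact (closure Y ×ˢ closure Z))
    (hG0 : CondG0 X Y Z G) (hG1 : CondG1 X Y Z G) :
    ∀ u : E m → ℝ, GConvex X Y Z G u →
      ∀ y₁ y₂ : E m → E n,
        (∀ x ∈ X, y₁ x ∈ GSubdiff X Y Z G u x) →
        (∀ x ∈ X, y₂ x ∈ GSubdiff X Y Z G u x) →
        ∀ᵐ x ∂((volume : Measure (E m)).restrict X), y₁ x = y₂ x := by
  intro u hu y₁ y₂ hy₁ hy₂
  have hsupp : ∀ x ∈ X, ∃ pp ∈ closure Y ×ˢ closure Z,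
      (fun q : E m × (E n × ℝ) => G q.1 q.2.1 q.2.2) (x, pp) = u x ∧
      ∀ x' ∈ X, (fun q : E m × (E n × ℝ) => G q.1 q.2.1 q.2.2) (x', pp) ≤ u x' := by
    intro x hx
    obtain ⟨y₀, hy₀, z₀, hz₀, he, hs⟩ := hu x hx
    exact ⟨(y₀, z₀), ⟨hy₀, hz₀⟩, he.symm, hs⟩
  have hdiff := MZ.ae_diff_of_supports hXo hWc hG0 hsupp
  filter_upwards [ae_restrict_mem hXo.measurableSet, ae_restrict_of_ae hdiff]
    with x hxX hdx
  obtain ⟨hy₁Y, z₁, hz₁, he₁, hs₁⟩ := hy₁ x hxX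
  obtain ⟨hy₂Y, z₂, hz₂, he₂, hs₂⟩ := hy₂ x hxX
  have := MZ.support_unique hXo hG0 hG1 hxX (hdx hxX)
    (p := (y₁ x, z₁)) (q := (y₂ x, z₂)) ⟨hy₁Y, hz₁⟩ ⟨hy₂Y, hz₂⟩ he₁ he₂ hs₁ hs₂
  exact congrArg Prod.fst this


lemma MZ.zsel_aemeas {zl zu : ℝ} (hzz : zl < zu) {X : Set (E m)} {Y : Set (E n)}
    {G : E m → E n → ℝ → ℝ}
    (hanti : ∀ x ∈ X, ∀ y ∈ closure Y, StrictAntiOn (fun z => G x y z) (Icc zl zu))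
    {gt : E m × (E n × ℝ) → ℝ} (hgt : Continuous gt)
    (hgte : ∀ x ∈ X, ∀ y ∈ closure Y, ∀ z ∈ Icc zl zu, gt (x, (y, z)) = G x y z)
    {ν : Measure (E m)} (hν : ∀ᵐ x ∂ν, x ∈ X)
    {u' : E m → ℝ} (hu' : AEMeasurable u' ν)
    {ys : E m → E n} (hys : AEMeasurable ys ν) (hysY : ∀ x ∈ X, ys x ∈ closure Y)
    {zf : E m → ℝ} (hzf : ∀ x ∈ X, zf x ∈ Icc zl zu)
    (heq : ∀ x ∈ X, G x (ys x) (zf x) = u' x) :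
    AEMeasurable zf ν := by
  -- a countable dense subset of `Icc zl zu`
  obtain ⟨Q0, hQ0c, hQ0d⟩ := TopologicalSpace.exists_countable_dense (↥(Icc zl zu))
  set Q : Set ℝ := Subtype.val '' Q0 with hQdef
  have hQc : Q.Countable := hQ0c.image _
  have hQsub : Q ⊆ Icc zl zu := by rintro q ⟨q0, -, rfl⟩; exact q0.2
  have hQdense : ∀ w ∈ Icc zl zu, w ∈ closure Q := by
    intro w hw
    have : (⟨w, hw⟩ : ↥(Icc zl zu)) ∈ closure Q0 := hQ0d _
    exact map_mem_closure continuous_subtype_val this (fun y hy => mem_image_of_mem _ hy)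
  have hQne : Q.Nonempty := by
    rcases Q.eq_empty_or_nonempty with h | h
    · exfalso
      have := hQdense zl ⟨le_refl zl, hzz.le⟩
      rw [h, closure_empty] at this
      exact this
    · exact h
  obtain ⟨qe, hqe⟩ := hQc.exists_eq_range hQne
  have hqeIcc : ∀ j, qe j ∈ Icc zl zu := fun j => hQsub (hqe ▸ mem_range_self j)
  -- approximating functions
  set v : ℕ → E m → ℝ := fun j x => if u' x ≤ gt (x, (ys x, qe j)) then qe j else zl with hv
  have hd : ∀ j, AEMeasurable (fun x => gt (x, (ys x, qe j))) ν := fun j =>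
    hgt.measurable.comp_aemeasurable (aemeasurable_id.prodMk (hys.prodMk aemeasurable_const))
  have hvmeas : ∀ j, AEMeasurable (v j) ν := by
    intro j
    set u0 := hu'.mk u' with hu0
    set d0 := (hd j).mk _ with hd0
    have hcongr : v j =ᵐ[ν] (fun x => if u0 x ≤ d0 x then qe j else zl) := by
      filter_upwards [hu'.ae_eq_mk, (hd j).ae_eq_mk] with x h1 h2
      simp only [hv]
      rw [h1, h2]
    exact (Measurable.aemeasurable (Measurable.ite
      (measurableSet_le hu'.measurable_mk (hd j).measurable_mk)
      measurable_const measurable_const)).congr hcongr.symm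
  set w : ℕ → E m → ℝ := fun i => Nat.rec (v 0) (fun i wi x => max (wi x) (v (i+1) x)) i
    with hwdef
  have hwmeas : ∀ i, AEMeasurable (w i) ν := by
    intro i
    induction i with
    | zero => exact hvmeas 0
    | succ i ih => exact ih.max (hvmeas (i+1))
  have hwsucc : ∀ i x, w (i+1) x = max (w i x) (v (i+1) x) := fun i x => rfl
  have hwmono : ∀ x, Monotone (fun i => w i x) := by
    intro x
    apply monotone_nat_of_le_succ
    intro i
    rw [hwsucc]
    exact le_max_left _ _
  have hwv : ∀ j x, v j x ≤ w j x := by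
    intro j x
    induction j with
    | zero => exact le_refl _
    | succ i _ => rw [hwsucc]; exact le_max_right _ _
  -- pointwise convergence at points of X
  have hconv : ∀ x ∈ X, Tendsto (fun i => w i x) atTop (𝓝 (zf x)) := by
    intro x hx
    have hvle : ∀ j, v j x ≤ zf x := by
      intro j
      simp only [hv]
      split_ifs with hcond
      · by_contra hgt'
        push_neg at hgt'
        have h1 : G x (ys x) (qe j) < G x (ys x) (zf x) :=
          hanti x hx (ys x) (hysY x hx) (hzf x hx) (hqeIcc j) hgt'
        rw [heq x hx] at h1
        rw [hgte x hx (ys x) (hysY x hx) (qe j) (hqeIcc j)] at hcond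
        linarith
      · exact (hzf x hx).1
    have hwle : ∀ i, w i x ≤ zf x := by
      intro i
      induction i with
      | zero => exact hvle 0
      | succ i ih => rw [hwsucc]; exact max_le ih (hvle (i+1))
    have hvge : ∀ ε > 0, ∃ j, zf x - ε < v j x := by
      intro ε hε
      rcases eq_or_lt_of_le (hzf x hx).1 with hzl | hzl
      · refine ⟨0, ?_⟩
        have : zl ≤ v 0 x := by
          simp only [hv]; split_ifs
          · exact (hqeIcc 0).1
          · exact le_refl _
        rw [← hzl] at *
        linarith
      · -- zl < zf x
        set t : ℝ := max ((zl + zf x)/2) (zf x - ε/2) with ht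
        have htlt : t < zf x := by
          rw [ht]
          apply max_lt
          · linarith
          · linarith
        have htgt : zf x - ε < t := by
          rw [ht]
          have : zf x - ε < zf x - ε/2 := by linarith
          exact this.trans_le (le_max_right _ _)
        have htzl : zl < t := by
          rw [ht]
          have : zl < (zl + zf x)/2 := by linarith
          exact this.trans_le (le_max_left _ _)
        have htIcc : t ∈ Icc zl zu := ⟨htzl.le, htlt.le.trans (hzf x hx).2⟩
        set δ : ℝ := min (zf x - t) (t - (zf x - ε)) with hδ
        have hδpos : 0 < δ := lt_min (by linarith) (by linarith)
        obtain ⟨q, hqQ, hqd⟩ := Metric.mem_closure_iff.1 (hQdense t htIcc) δ hδpos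
        rw [hqe] at hqQ
        obtain ⟨j, rfl⟩ := hqQ
        refine ⟨j, ?_⟩
        rw [Real.dist_eq, abs_lt] at hqd
        have hql : qe j < zf x := by
          have : δ ≤ zf x - t := min_le_left _ _
          -- note dist t (qe j); careful with orientation
          have h2 : t - qe j < δ ∧ qe j - t < δ := by
            constructor <;> [linarith [hqd.1]; linarith [hqd.2]]
          linarith [h2.2]
        have hqg : zf x - ε < qe j := by
          have : δ ≤ t - (zf x - ε) := min_le_right _ _
          have h2 : t - qe j < δ := by linarith [hqd.1]
          linarith
        have hcond : u' x ≤ gt (x, (ys x, qe j)) := by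
          rw [hgte x hx (ys x) (hysY x hx) (qe j) (hqeIcc j), ← heq x hx]
          rcases eq_or_lt_of_le (le_of_lt hql) with h | h
          · rw [h]
          · exact le_of_lt (hanti x hx (ys x) (hysY x hx) (hqeIcc j) (hzf x hx) hql)
        simp only [hv]
        rw [if_pos hcond]
        exact hqg
    rw [Metric.tendsto_atTop]
    intro ε hε
    obtain ⟨j₀, hj₀⟩ := hvge ε hε
    refine ⟨j₀, fun i hi => ?_⟩
    have h1 : zf x - ε < w i x := hj₀.trans_le ((hwv j₀ x).trans (hwmono x hi))
    have h2 : w i x ≤ zf x := hwle i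
    rw [Real.dist_eq, abs_lt]
    constructor <;> linarith
  exact aemeasurable_of_tendsto_metrizable_ae atTop hwmeas
    (by filter_upwards [hν] with x hx using hconv x hx)


/-- Theorem 3.9: assume (G0), (G1), (G4), (G5), `z̄ < +∞` and
`μ ≪ L^m`.  With `Π̃(u,y) := ∫_X π(x, y(x), H(x, y(x), u(x))) dμ(x)`, the
maximum of `Π̃` over all `G`-convex `u ≥ u_∅` and all measurable selections
`y(x) ∈ ∂^G u(x)` is attained; moreover, for each such `u` the selection `y` is
uniquely determined at Lebesgue-almost every point of `X`.  (Since `z̄ < ∞`,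
`G(x,y,z̄)` in (G5) is just the continuous extension evaluated at `z̄`.) -/
theorem principal_program_maximum_attained
    {m n : ℕ} (X : Set (E m)) (Y : Set (E n)) (zl zu : ℝ)
    (hzz : zl < zu) (Z : Set ℝ) (hZ : Z = Ioo zl zu)
    (hXo : IsOpen X) (hXb : Bornology.IsBounded X)
    (hYo : IsOpen Y) (hYb : Bornology.IsBounded Y)
    (G π H : E m → E n → ℝ → ℝ)
    (hH : ∀ x ∈ X, ∀ y ∈ closure Y, ∀ z ∈ closure Z, H x y (G x y z) = z)
    (hG0 : CondG0 X Y Z G) (hG1 : CondG1 X Y Z G) (hG4 : CondG4 X Y Z G)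
    (y0 : E n) (z0 : ℝ)
    (hG5 : ContinuousOn (fun p : E m × E n × ℝ => π p.1 p.2.1 p.2.2)
        (closure X ×ˢ (closure Y ×ˢ closure Z)) ∧
      y0 ∈ closure Y ∧ z0 ∈ closure Z ∧
      ∀ x ∈ X, ∀ y ∈ closure Y, G x y zu ≤ G x y0 z0)
    (μ : Measure (E m)) (hμ : AdmissibleMeasure X μ) :
    (∃ u : E m → ℝ, ∃ ysel : E m → E n,
      (GConvex X Y Z G u ∧ (∀ x ∈ X, G x y0 z0 ≤ u x) ∧
        (∀ x ∈ X, ysel x ∈ GSubdiff X Y Z G u x) ∧ AEMeasurable ysel μ) ∧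
      ∀ u' : E m → ℝ, ∀ ysel' : E m → E n,
        GConvex X Y Z G u' → (∀ x ∈ X, G x y0 z0 ≤ u' x) →
        (∀ x ∈ X, ysel' x ∈ GSubdiff X Y Z G u' x) → AEMeasurable ysel' μ →
        (∫ x in X, π x (ysel' x) (H x (ysel' x) (u' x)) ∂μ) ≤
          ∫ x in X, π x (ysel x) (H x (ysel x) (u x)) ∂μ) ∧
    (∀ u : E m → ℝ, GConvex X Y Z G u →
      ∀ y₁ y₂ : E m → E n,
        (∀ x ∈ X, y₁ x ∈ GSubdiff X Y Z G u x) →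
        (∀ x ∈ X, y₂ x ∈ GSubdiff X Y Z G u x) →
        ∀ᵐ x ∂((volume : Measure (E m)).restrict X), y₁ x = y₂ x) := by
  classical
  -- ## basic sets and compactness
  have hclZ : closure Z = Icc zl zu := by rw [hZ]; exact closure_Ioo hzz.ne
  set W : Set (E n × ℝ) := closure Y ×ˢ Icc zl zu with hWdef
  have hYcc : IsCompact (closure Y) := Metric.isCompact_of_isClosed_isBounded isClosed_closure hYb.closure
  have hWc : IsCompact W := hYcc.prod isCompact_Icc
  have hWc' : IsCompact (closure Y ×ˢ closure Z) := by rw [hclZ]; exact hWc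
  have hXcc : IsCompact (closure X) := Metric.isCompact_of_isClosed_isBounded isClosed_closure hXb.closure
  set S : Set (E m × (E n × ℝ)) := closure X ×ˢ W with hSdef
  have hSc : IsCompact S := hXcc.prod hWc
  set gb : E m × (E n × ℝ) → ℝ := fun q => G q.1 q.2.1 q.2.2 with hgbdef
  set pb : E m × (E n × ℝ) → ℝ := fun q => π q.1 q.2.1 q.2.2 with hpbdef
  have hG0W : ContDiffOn ℝ 1 gb S := by
    rw [hSdef, hWdef, ← hclZ]; exact hG0
  have hgbC : ContinuousOn gb S := hG0W.continuousOn
  have hpbC : ContinuousOn pb S := by rw [hSdef, hWdef, ← hclZ]; exact hG5.1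
  have hmemS : ∀ {x : E m} {p : E n × ℝ}, x ∈ X → p ∈ W → (x, p) ∈ S :=
    fun hx hp => ⟨subset_closure hx, hp⟩
  -- ## continuous extensions and bounds
  obtain ⟨gt, hgtc, hgte⟩ := MZ.exists_ext hSc.isClosed hgbC
  obtain ⟨pt, hptc, hpte⟩ := MZ.exists_ext hSc.isClosed hpbC
  obtain ⟨Mg0, hMg0⟩ := hSc.exists_bound_of_continuousOn hgbC
  obtain ⟨Mp0, hMp0⟩ := hSc.exists_bound_of_continuousOn hpbC
  set Mg : ℝ := max Mg0 0 with hMgdef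
  set Mp : ℝ := max Mp0 0 with hMpdef
  have hMg : ∀ q ∈ S, |gb q| ≤ Mg := fun q hq =>
    (by simpa using hMg0 q hq : |gb q| ≤ Mg0).trans (le_max_left _ _)
  have hMp : ∀ q ∈ S, |pb q| ≤ Mp := fun q hq =>
    (by simpa using hMp0 q hq : |pb q| ≤ Mp0).trans (le_max_left _ _)
  -- ## membership facts
  have hy0 : y0 ∈ closure Y := hG5.2.1
  have hz0 : z0 ∈ Icc zl zu := by rw [← hclZ]; exact hG5.2.2.1
  have hp0W : ((y0, z0) : E n × ℝ) ∈ W := ⟨hy0, hz0⟩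
  -- ## measure facts
  obtain ⟨hprob, hac, hXnull⟩ := hμ
  haveI : IsProbabilityMeasure μ := hprob
  have hXmeas : MeasurableSet X := hXo.measurableSet
  have hμX : ∀ᵐ x ∂μ, x ∈ X := by
    rw [ae_iff]
    exact hXnull
  have hrest : μ.restrict X = μ := Measure.restrict_eq_self_of_ae_mem hμX
  -- ## strict antitonicity in z
  have hanti : ∀ x ∈ X, ∀ y ∈ closure Y, StrictAntiOn (fun z => G x y z) (Icc zl zu) := by
    intro x hx y hy
    have hcont : ContinuousOn (fun z => G x y z) (Icc zl zu) := by
      have h1 : Continuous (fun z : ℝ => gt (x, (y, z))) :=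
        hgtc.comp (continuous_const.prodMk (continuous_const.prodMk continuous_id))
      refine h1.continuousOn.congr fun z hz => ?_
      exact (hgte (x, (y, z)) (hmemS hx ⟨hy, hz⟩)).symm
    refine strictAntiOn_of_deriv_neg (convex_Icc zl zu) hcont fun z hz => ?_
    rw [interior_Icc] at hz
    have := hG4 x hx y hy z (by rw [hclZ]; exact Ioo_subset_Icc_self hz)
    simpa [Gz] using this
  -- H evaluated on the graph
  have hHz : ∀ x ∈ X, ∀ y ∈ closure Y, ∀ z ∈ Icc zl zu, H x y (G x y z) = z := by
    intro x hx y hy z hz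
    exact hH x hx y hy z (by rw [hclZ]; exact hz)
  -- ## the class of admissible contracts
  set AdmC : (E m → E n × ℝ) → Prop := fun ξ =>
    (∀ x ∈ X, ξ x ∈ W) ∧ (∀ x ∈ X, ∀ x' ∈ X, gb (x', ξ x) ≤ gb (x', ξ x')) ∧
    (∀ x ∈ X, gb (x, (y0, z0)) ≤ gb (x, ξ x)) ∧ AEMeasurable ξ μ with hAdmCdef
  set Fv : (E m → E n × ℝ) → ℝ := fun ξ => ∫ x, pt (x, ξ x) ∂μ with hFvdef
  have hIntg : ∀ ξ : E m → E n × ℝ, AEMeasurable ξ μ → (∀ x ∈ X, ξ x ∈ W) →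
      Integrable (fun x => pt (x, ξ x)) μ ∧ |Fv ξ| ≤ Mp := by
    intro ξ hξm hξW
    have hsm : AEStronglyMeasurable (fun x => pt (x, ξ x)) μ :=
      (hptc.measurable.comp_aemeasurable (aemeasurable_id.prodMk hξm)).aestronglyMeasurable
    have hbd : ∀ᵐ x ∂μ, ‖pt (x, ξ x)‖ ≤ Mp := by
      filter_upwards [hμX] with x hx
      rw [hpte _ (hmemS hx (hξW x hx))]
      simpa [Real.norm_eq_abs] using hMp _ (hmemS hx (hξW x hx))
    constructor
    · exact Integrable.mono' (integrable_const Mp) hsm hbd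
    · have := norm_integral_le_of_norm_le_const hbd
      simpa [Real.norm_eq_abs, measure_univ] using this
  -- the admissible set of values
  set A : Set ℝ := Fv '' {ξ | AdmC ξ} with hAdef
  have hξ₀ : AdmC (fun _ => ((y0, z0) : E n × ℝ)) := by
    refine ⟨fun x _ => hp0W, fun x hx x' hx' => le_refl _, fun x _ => le_refl _,
      aemeasurable_const⟩
  have hAne : A.Nonempty := ⟨_, ⟨_, hξ₀, rfl⟩⟩
  have hAbdd : BddAbove A := by
    refine ⟨Mp, ?_⟩
    rintro a ⟨ξ, hξ, rfl⟩
    exact (le_abs_self _).trans ((hIntg ξ hξ.2.2.2 hξ.1).2)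
  set V : ℝ := sSup A with hVdef
  -- ## maximizing sequence
  have hseq : ∀ k : ℕ, ∃ ξ, AdmC ξ ∧ V - 1/((k:ℝ)+1) < Fv ξ ∧ Fv ξ ≤ V := by
    intro k
    have h1 : V - 1/((k:ℝ)+1) < V := by
      have : (0:ℝ) < 1/((k:ℝ)+1) := by positivity
      linarith
    obtain ⟨a, ha, hlt⟩ := exists_lt_of_lt_csSup hAne h1
    obtain ⟨ξ, hξ, rfl⟩ := ha
    exact ⟨ξ, hξ, hlt, le_csSup hAbdd ⟨ξ, hξ, rfl⟩⟩
  choose ξs hξsA hξslt hξsle using hseq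
  -- countable dense subset of X
  obtain ⟨D0, hD0c, hD0d⟩ := TopologicalSpace.exists_countable_dense (↥X)
  set D : Set (E m) := Subtype.val '' D0 with hDdef
  have hDc : D.Countable := hD0c.image _
  have hDsub : D ⊆ X := by rintro d ⟨d0, -, rfl⟩; exact d0.2
  have hDdense : ∀ x ∈ X, x ∈ closure D := by
    intro x hx
    exact map_mem_closure continuous_subtype_val (hD0d (⟨x, hx⟩ : ↥X))
      (fun y hy => mem_image_of_mem _ hy)
  haveI : Countable ↥D := hDc.to_subtype
  -- subsequence along which the utilities converge on D
  have hbound : ∀ k (d : ↥D), |gb ((d : E m), ξs k (d : E m))| ≤ Mg := fun k d =>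
    hMg _ (hmemS (hDsub d.2) ((hξsA k).1 _ (hDsub d.2)))
  obtain ⟨φ, hφ, hDlim⟩ := MZ.exists_subseq_tendsto (fun k (d : ↥D) => gb ((d : E m), ξs k (d : E m))) hbound
  set ζ : ℕ → E m → E n × ℝ := fun k => ξs (φ k) with hζdef
  have hζW : ∀ k, ∀ x ∈ X, ζ k x ∈ W := fun k => (hξsA (φ k)).1
  have hζIC : ∀ k, ∀ x ∈ X, ∀ x' ∈ X, gb (x', ζ k x) ≤ gb (x', ζ k x') :=
    fun k => (hξsA (φ k)).2.1
  have hζIR : ∀ k, ∀ x ∈ X, gb (x, (y0, z0)) ≤ gb (x, ζ k x) :=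
    fun k => (hξsA (φ k)).2.2.1
  have hζmeas : ∀ k, AEMeasurable (ζ k) μ := fun k => (hξsA (φ k)).2.2.2
  -- equioscillation
  have hunif : ∀ ε > 0, ∃ δ > 0, ∀ p ∈ W, ∀ x ∈ closure X, ∀ x' ∈ closure X,
      dist x x' < δ → |gb (x, p) - gb (x', p)| < ε := by
    intro ε hε
    have huc := hSc.uniformContinuousOn_of_continuous hgbC
    rw [Metric.uniformContinuousOn_iff] at huc
    obtain ⟨δ, hδ, hd⟩ := huc ε hε
    refine ⟨δ, hδ, fun p hp x hx x' hx' hdist => ?_⟩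
    have hpd : dist ((x, p) : E m × (E n × ℝ)) (x', p) < δ := by
      rw [Prod.dist_eq]
      simpa [dist_self] using lt_of_le_of_lt (le_of_eq (max_eq_left dist_nonneg)) hdist
    have := hd (x, p) ⟨hx, hp⟩ (x', p) ⟨hx', hp⟩ hpd
    rwa [Real.dist_eq] at this
  -- two-sided oscillation bound for the utilities
  have hosc : ∀ ε > 0, ∃ δ > 0, ∀ k, ∀ x ∈ X, ∀ x' ∈ X, dist x x' < δ →
      |gb (x, ζ k x) - gb (x', ζ k x')| < ε := by
    intro ε hε
    obtain ⟨δ, hδ, hd⟩ := hunif ε hε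
    refine ⟨δ, hδ, fun k x hx x' hx' hdist => ?_⟩
    rw [abs_sub_lt_iff]
    constructor
    · have h1 : gb (x', ζ k x) ≤ gb (x', ζ k x') := hζIC k x hx x' hx'
      have h2 : gb (x, ζ k x) - gb (x', ζ k x) < ε := by
        have := hd (ζ k x) (hζW k x hx) x (subset_closure hx) x' (subset_closure hx') hdist
        have h3 := abs_lt.1 this
        linarith [h3.2]
      linarith
    · have h1 : gb (x, ζ k x') ≤ gb (x, ζ k x) := hζIC k x' hx' x hx
      have h2 : gb (x', ζ k x') - gb (x, ζ k x') < ε := by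
        have := hd (ζ k x') (hζW k x' hx') x (subset_closure hx) x' (subset_closure hx') hdist
        have h3 := abs_lt.1 this
        linarith [h3.1, h3.2]
      linarith
  -- utilities converge pointwise on X
  have hCauchy : ∀ x ∈ X, ∃ L, Tendsto (fun k => gb (x, ζ k x)) atTop (𝓝 L) := by
    intro x hx
    apply cauchySeq_tendsto_of_complete
    rw [Metric.cauchySeq_iff]
    intro ε hε
    obtain ⟨δ, hδ, hd⟩ := hosc (ε/3) (by linarith)
    obtain ⟨d, hdD, hdist⟩ := Metric.mem_closure_iff.1 (hDdense x hx) δ hδ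
    obtain ⟨L, hL⟩ := hDlim ⟨d, hdD⟩
    have hLC := hL.cauchySeq
    rw [Metric.cauchySeq_iff] at hLC
    obtain ⟨N, hN⟩ := hLC (ε/3) (by linarith)
    refine ⟨N, fun k hk l hl => ?_⟩
    have hxd : dist x d < δ := hdist
    have e1 : |gb (x, ζ k x) - gb (d, ζ k d)| < ε/3 := hd k x hx d (hDsub hdD) hxd
    have e3 : |gb (x, ζ l x) - gb (d, ζ l d)| < ε/3 := hd l x hx d (hDsub hdD) hxd
    have e2 : |gb (d, ζ k d) - gb (d, ζ l d)| < ε/3 := by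
      have := hN k hk l hl
      rwa [Real.dist_eq] at this
    rw [Real.dist_eq]
    have a1 := abs_lt.1 e1
    have a2 := abs_lt.1 e2
    have a3 := abs_lt.1 e3
    rw [abs_lt]
    constructor <;> [linarith [a1.1, a2.1, a3.2]; linarith [a1.2, a2.2, a3.1]]
  choose! L hLlim using hCauchy
  -- ## ultrafilter limit contract
  set 𝒰 : Ultrafilter ℕ := Ultrafilter.of atTop with h𝒰def
  have h𝒰le : (𝒰 : Filter ℕ) ≤ atTop := Ultrafilter.of_le _
  haveI h𝒰ne : (𝒰 : Filter ℕ).NeBot := Ultrafilter.neBot 𝒰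
  have hpstar : ∀ x ∈ X, ∃ p ∈ W, Tendsto (fun k => ζ k x) (𝒰 : Filter ℕ) (𝓝 p) := by
    intro x hx
    have hle : (Ultrafilter.map (fun k => ζ k x) 𝒰 : Filter (E n × ℝ)) ≤ 𝓟 W := by
      rw [Ultrafilter.coe_map, map_le_iff_le_comap, comap_principal]
      exact le_principal_iff.2 (univ_mem' fun k => hζW k x hx)
    obtain ⟨p, hpW, hple⟩ := hWc.ultrafilter_le_nhds _ hle
    exact ⟨p, hpW, hple⟩
  choose! ps hpsW hpsU using hpstar
  set ustar : E m → ℝ := fun x => gb (x, ps x) with hustardef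
  -- gb along the ultrafilter
  have hgbU : ∀ x' ∈ X, ∀ x ∈ X, Tendsto (fun k => gb (x', ζ k x)) (𝒰 : Filter ℕ)
      (𝓝 (gb (x', ps x))) := by
    intro x' hx' x hx
    have h1 : Tendsto (fun k => ((x', ζ k x) : E m × (E n × ℝ))) (𝒰 : Filter ℕ)
        (𝓝 (x', ps x)) := tendsto_const_nhds.prodMk_nhds (hpsU x hx)
    have h2 : Tendsto (fun k => gt (x', ζ k x)) (𝒰 : Filter ℕ) (𝓝 (gt (x', ps x))) :=
      (hgtc.tendsto _).comp h1
    have he : ∀ k, gt (x', ζ k x) = gb (x', ζ k x) := fun k =>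
      hgte _ (hmemS hx' (hζW k x hx))
    have he2 : gt (x', ps x) = gb (x', ps x) := hgte _ (hmemS hx' (hpsW x hx))
    rw [he2] at h2
    exact h2.congr he
  -- utilities converge to ustar along atTop
  have hu_atTop : ∀ x ∈ X, Tendsto (fun k => gb (x, ζ k x)) atTop (𝓝 (ustar x)) := by
    intro x hx
    have h1 := hLlim x hx
    have h2 : Tendsto (fun k => gb (x, ζ k x)) (𝒰 : Filter ℕ) (𝓝 (L x)) :=
      h1.mono_left h𝒰le
    have h3 := tendsto_nhds_unique h2 (hgbU x hx x hx)
    rwa [h3] at h1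
  -- limit contract is incentive compatible etc.
  have hIC : ∀ x ∈ X, ∀ x' ∈ X, gb (x', ps x) ≤ ustar x' := by
    intro x hx x' hx'
    refine le_of_tendsto_of_tendsto' (hgbU x' hx' x hx)
      ((hu_atTop x' hx').mono_left h𝒰le) fun k => hζIC k x hx x' hx'
  have hIR : ∀ x ∈ X, gb (x, (y0, z0)) ≤ ustar x := by
    intro x hx
    exact ge_of_tendsto' ((hu_atTop x hx).mono_left h𝒰le) (fun k => hζIR k x hx)
  have hsupp : ∀ x ∈ X, ∃ p ∈ W, gb (x, p) = ustar x ∧ ∀ x' ∈ X, gb (x', p) ≤ ustar x' :=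
    fun x hx => ⟨ps x, hpsW x hx, rfl, fun x' hx' => hIC x hx x' hx'⟩
  -- a.e. differentiability of ustar
  have hdiffvol : ∀ᵐ x ∂(volume : Measure (E m)), x ∈ X → DifferentiableAt ℝ ustar x :=
    MZ.ae_diff_of_supports hXo hWc hG0W hsupp
  have hdiffμ : ∀ᵐ x ∂μ, x ∈ X → DifferentiableAt ℝ ustar x := hac.ae_le hdiffvol
  -- ## upgraded convergence at differentiability points
  have hconvAt : ∀ x ∈ X, DifferentiableAt ℝ ustar x →
      Tendsto (fun k => ζ k x) atTop (𝓝 (ps x)) := by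
    intro x hx hdx
    refine MZ.tendsto_of_unique_clusterPt hWc (fun k => hζW k x hx) ?_
    intro b hb
    obtain ⟨𝒱, h𝒱le, h𝒱t⟩ := mapClusterPt_iff_ultrafilter.1 hb
    haveI : (𝒱 : Filter ℕ).NeBot := Ultrafilter.neBot 𝒱
    have hbW : b ∈ W := hWc.isClosed.mem_of_tendsto h𝒱t
      (Eventually.of_forall fun k => hζW k x hx)
    -- b is a support pair at x
    have hgbV : ∀ x' ∈ X, Tendsto (fun k => gb (x', ζ k x)) (𝒱 : Filter ℕ)
        (𝓝 (gb (x', b))) := by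
      intro x' hx'
      have h1 : Tendsto (fun k => ((x', ζ k x) : E m × (E n × ℝ))) (𝒱 : Filter ℕ)
          (𝓝 (x', b)) := tendsto_const_nhds.prodMk_nhds h𝒱t
      have h2 := (hgtc.tendsto _).comp h1
      have he : ∀ k, gt (x', ζ k x) = gb (x', ζ k x) := fun k =>
        hgte _ (hmemS hx' (hζW k x hx))
      have he2 : gt (x', b) = gb (x', b) := hgte _ (hmemS hx' hbW)
      rw [he2] at h2
      exact h2.congr he
    have hbe : gb (x, b) = ustar x :=
      tendsto_nhds_unique (hgbV x hx) ((hu_atTop x hx).mono_left h𝒱le)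
    have hbs : ∀ x' ∈ X, gb (x', b) ≤ ustar x' := by
      intro x' hx'
      refine le_of_tendsto_of_tendsto' (hgbV x' hx')
        ((hu_atTop x' hx').mono_left h𝒱le) fun k => hζIC k x hx x' hx'
    have hpse : gb (x, ps x) = ustar x := rfl
    refine MZ.support_unique hXo hG0 hG1 hx hdx (p := b) (q := ps x)
      ?_ ?_ hbe hpse hbs (fun x' hx' => hIC x hx x' hx')
    · rw [hclZ]; exact hbW
    · rw [hclZ]; exact hpsW x hx
  -- ## dominated convergence
  have hFmeas : ∀ k, AEStronglyMeasurable (fun x => pt (x, ζ k x)) μ := fun k =>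
    (hptc.measurable.comp_aemeasurable (aemeasurable_id.prodMk (hζmeas k))).aestronglyMeasurable
  have hDCT : Tendsto (fun k => Fv (ζ k)) atTop (𝓝 (Fv ps)) := by
    refine tendsto_integral_of_dominated_convergence (fun _ => Mp) hFmeas
      (integrable_const Mp) (fun k => ?_) ?_
    · filter_upwards [hμX] with x hx
      rw [hpte _ (hmemS hx (hζW k x hx))]
      simpa [Real.norm_eq_abs] using hMp _ (hmemS hx (hζW k x hx))
    · filter_upwards [hμX, hdiffμ] with x hx hdx
      have h1 : Tendsto (fun k => ((x, ζ k x) : E m × (E n × ℝ))) atTop (𝓝 (x, ps x)) :=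
        tendsto_const_nhds.prodMk_nhds (hconvAt x hx (hdx hx))
      exact (hptc.tendsto _).comp h1
  -- value of the sequence tends to V
  have hVseq : Tendsto (fun k => Fv (ζ k)) atTop (𝓝 V) := by
    have hlow : Tendsto (fun k => V - 1/((φ k : ℝ)+1)) atTop (𝓝 (V - 0)) := by
      refine tendsto_const_nhds.sub ?_
      have h0 : Tendsto (fun k : ℕ => 1/((k : ℝ)+1)) atTop (𝓝 0) :=
        tendsto_one_div_add_atTop_nhds_zero_nat
      exact h0.comp hφ.tendsto_atTop
    rw [sub_zero] at hlow
    refine tendsto_of_tendsto_of_tendsto_of_le_of_le hlow tendsto_const_nhds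
      (fun k => (hξslt (φ k)).le) (fun k => hξsle (φ k))
  have hVps : Fv ps = V := tendsto_nhds_unique hDCT hVseq
  -- measurability of the limit contract
  have hpsmeas : AEMeasurable ps μ := by
    refine aemeasurable_of_tendsto_metrizable_ae atTop hζmeas ?_
    filter_upwards [hμX, hdiffμ] with x hx hdx
    exact hconvAt x hx (hdx hx)
  have hpsAdm : AdmC ps :=
    ⟨hpsW, fun x hx x' hx' => hIC x hx x' hx', hIR, hpsmeas⟩
  -- ## assembling the final statement
  refine ⟨⟨ustar, fun x => (ps x).1, ⟨?_, ?_, ?_, ?_⟩, ?_⟩, MZ.part2 hXo hWc' hG0 hG1⟩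
  · -- G-convexity of ustar
    intro x₀ hx₀
    refine ⟨(ps x₀).1, (hpsW x₀ hx₀).1, (ps x₀).2, ?_, rfl, ?_⟩
    · rw [hclZ]; exact (hpsW x₀ hx₀).2
    · intro x hx; exact hIC x₀ hx₀ x hx
  · -- participation constraint
    intro x hx; exact hIR x hx
  · -- selection is in the subdifferential
    intro x hx
    refine ⟨(hpsW x hx).1, (ps x).2, ?_, rfl, ?_⟩
    · rw [hclZ]; exact (hpsW x hx).2
    · intro x' hx'; exact hIC x hx x' hx'
  · -- selection is measurable
    exact measurable_fst.comp_aemeasurable hpsmeas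
  · -- optimality
    intro u' ysel' hGc' hge' hsub' hmeas'
    -- select price witnesses
    have hchoice : ∀ x : E m, ∃ z : ℝ, x ∈ X → (z ∈ Icc zl zu ∧ G x (ysel' x) z = u' x ∧
        ∀ x' ∈ X, G x' (ysel' x) z ≤ u' x') := by
      intro x
      by_cases hx : x ∈ X
      · obtain ⟨hY, z, hz, he, hs⟩ := hsub' x hx
        exact ⟨z, fun _ => ⟨by rw [← hclZ]; exact hz, he, hs⟩⟩
      · exact ⟨z0, fun hx' => absurd hx' hx⟩
    choose zf hzf using hchoice
    have hysY : ∀ x ∈ X, ysel' x ∈ closure Y := fun x hx => (hsub' x hx).1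
    -- u' is continuous on X, hence a.e. measurable
    have hsupp' : ∀ x ∈ X, ∃ p ∈ W, gb (x, p) = u' x ∧ ∀ x' ∈ X, gb (x', p) ≤ u' x' := by
      intro x hx
      obtain ⟨yy, hyy, zz, hzz', he, hs⟩ := hGc' x hx
      exact ⟨(yy, zz), ⟨hyy, by rw [← hclZ]; exact hzz'⟩, he.symm, hs⟩
    have hu'cont : ContinuousOn u' X := MZ.continuousOn_of_supports hXo hWc hG0W hsupp'
    have hu'meas : AEMeasurable u' μ := by
      have : AEMeasurable u' (μ.restrict X) := hu'cont.aemeasurable hXmeas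
      rwa [hrest] at this
    -- the price selection is a.e. measurable
    have hgte' : ∀ x ∈ X, ∀ y ∈ closure Y, ∀ z ∈ Icc zl zu, gt (x, (y, z)) = G x y z :=
      fun x hx y hy z hz => hgte _ (hmemS hx ⟨hy, hz⟩)
    have hzfmeas : AEMeasurable zf μ :=
      MZ.zsel_aemeas hzz hanti hgtc hgte' hμX hu'meas hmeas'
        hysY (fun x hx => (hzf x hx).1) (fun x hx => (hzf x hx).2.1)
    set ξ' : E m → E n × ℝ := fun x => (ysel' x, zf x) with hξ'def
    have hξ'Adm : AdmC ξ' := by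
      refine ⟨fun x hx => show (ysel' x, zf x) ∈ W from ⟨hysY x hx, (hzf x hx).1⟩, ?_, ?_,
        hmeas'.prodMk hzfmeas⟩
      · intro x hx x' hx'
        have h1 : gb (x', ξ' x) ≤ u' x' := (hzf x hx).2.2 x' hx'
        have h2 : gb (x', ξ' x') = u' x' := (hzf x' hx').2.1
        rw [h2]; exact h1
      · intro x hx
        have h1 : gb (x, (y0, z0)) ≤ u' x := hge' x hx
        have h2 : gb (x, ξ' x) = u' x := (hzf x hx).2.1
        rw [h2]; exact h1
    have hle : Fv ξ' ≤ V := le_csSup hAbdd ⟨ξ', hξ'Adm, rfl⟩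
    -- identify the integrals in the statement with the contract values
    have hLHS : (∫ x in X, π x (ysel' x) (H x (ysel' x) (u' x)) ∂μ) = Fv ξ' := by
      rw [hrest]
      refine integral_congr_ae ?_
      filter_upwards [hμX] with x hx
      have he : u' x = G x (ysel' x) (zf x) := ((hzf x hx).2.1).symm
      rw [he, hHz x hx (ysel' x) (hysY x hx) (zf x) (hzf x hx).1]
      exact (hpte _ (hmemS hx (show (ysel' x, zf x) ∈ W from ⟨hysY x hx, (hzf x hx).1⟩))).symm
    have hRHS : (∫ x in X, π x ((ps x).1) (H x ((ps x).1) (ustar x)) ∂μ) = Fv ps := by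
      rw [hrest]
      refine integral_congr_ae ?_
      filter_upwards [hμX] with x hx
      have he : ustar x = G x ((ps x).1) ((ps x).2) := rfl
      rw [he, hHz x hx ((ps x).1) ((hpsW x hx).1) ((ps x).2) ((hpsW x hx).2)]
      exact (hpte _ (hmemS hx (hpsW x hx))).symm
    rw [hLHS, hRHS, hVps]
    exact hle


end PrincipalAgent
end
end

section
/- Assume (G0), (G1) and (G2). Then (G3) holds if and only if the set U := { u : X → ℝ : u is G-convex } is convex, i.e. (1−t)u₀ + t u₁ is G-convex whenever u₀, u₁ are G-convex and t ∈ [0,1]. -/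
/-!
Common framework for "The principal-agent problem: convexity/concavity of the
principal's problem" (McCann–Zhang).

Agent types live in `X ⊆ ℝ^m`, product types in `Y ⊆ ℝ^n`, prices in
`Z = (z̲, z̄) ⊆ ℝ` with `z̲` finite and `z̄ ∈ (z̲, +∞]` (an `EReal`).
The direct utility is `G(x,y,z)` and the principal's profit density `π(x,y,z)`.
-/

open Set MeasureTheory Filter Topology

noncomputable section

namespace PrincipalAgent

variable {m n : ℕ}

/-- Auxiliary: differentiability of a slice of `G` from (G0). -/
private lemma diffAt_slice {X : Set (E m)} {Y : Set (E n)} {Z : Set ℝ}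
    {G : E m → E n → ℝ → ℝ} (hG0 : CondG0 X Y Z G) (hXo : IsOpen X)
    {x₀ : E m} (hx₀ : x₀ ∈ X) {y : E n} {z : ℝ}
    (hy : y ∈ closure Y) (hz : z ∈ closure Z) :
    DifferentiableAt ℝ (fun x' => G x' y z) x₀ := by
  have hdiff : DifferentiableOn ℝ (fun p : E m × E n × ℝ => G p.1 p.2.1 p.2.2)
      (closure X ×ˢ (closure Y ×ˢ closure Z)) := hG0.differentiableOn one_ne_zero
  have hmem : ((x₀, (y, z)) : E m × E n × ℝ) ∈ closure X ×ˢ (closure Y ×ˢ closure Z) :=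
    ⟨subset_closure hx₀, hy, hz⟩
  have hι : DifferentiableWithinAt ℝ (fun x' : E m => ((x', (y, z)) : E m × E n × ℝ))
      (closure X) x₀ :=
    (differentiableAt_id.prodMk (differentiableAt_const _)).differentiableWithinAt
  have hmaps : Set.MapsTo (fun x' : E m => ((x', (y, z)) : E m × E n × ℝ))
      (closure X) (closure X ×ˢ (closure Y ×ˢ closure Z)) := fun x hx => ⟨hx, hy, hz⟩
  have hcomp := DifferentiableWithinAt.comp x₀ (hdiff _ hmem) hι hmaps
  exact hcomp.differentiableAt (mem_of_superset (hXo.mem_nhds hx₀) subset_closure)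


/-- Theorem 4.1: assume (G0), (G1) and (G2).  Then (G3) holds
if and only if the set `U` of `G`-convex functions is convex, i.e.
`(1-t)u₀ + t u₁` is `G`-convex whenever `u₀, u₁` are `G`-convex and
`t ∈ [0,1]`. -/
theorem condG3_iff_gconvex_set_convex
    {m n : ℕ} (X : Set (E m)) (Y : Set (E n)) (zl : ℝ) (zu : EReal)
    (hzz : (zl : EReal) < zu) (Z : Set ℝ) (hZ : Z = priceSet zl zu)
    (hXo : IsOpen X) (hXb : Bornology.IsBounded X)
    (hYo : IsOpen Y) (hYb : Bornology.IsBounded Y)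
    (G : E m → E n → ℝ → ℝ)
    (hG0 : CondG0 X Y Z G) (hG1 : CondG1 X Y Z G) (hG2 : CondG2 X Y Z G) :
    CondG3 X Y Z G ↔
      ∀ u₀ u₁ : E m → ℝ, GConvex X Y Z G u₀ → GConvex X Y Z G u₁ →
        ∀ t ∈ Icc (0:ℝ) 1,
          GConvex X Y Z G (fun x => (1 - t) * u₀ x + t * u₁ x) := by
  constructor
  · -- (G3) ⇒ U convex
    intro hG3 u₀ u₁ hu₀ hu₁ t ht x₀ hx₀
    obtain ⟨y₀, hy₀, z₀, hz₀, he₀, hle₀⟩ := hu₀ x₀ hx₀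
    obtain ⟨y₁, hy₁, z₁, hz₁, he₁, hle₁⟩ := hu₁ x₀ hx₀
    obtain ⟨-, hinj, ψ, -, hψ⟩ := hG1 x₀ hx₀
    set P := Phi G x₀ (y₀, z₀) with hP
    set Q := Phi G x₀ (y₁, z₁) with hQ
    have hPmem : P ∈ Phi G x₀ '' (closure Y ×ˢ closure Z) :=
      ⟨(y₀, z₀), ⟨hy₀, hz₀⟩, rfl⟩
    have hQmem : Q ∈ Phi G x₀ '' (closure Y ×ˢ closure Z) :=
      ⟨(y₁, z₁), ⟨hy₁, hz₁⟩, rfl⟩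
    set γ : ℝ → E n × ℝ := fun s => ψ ((1 - s) • P + s • Q) with hγdef
    have key : ∀ s ∈ Icc (0:ℝ) 1, γ s ∈ closure Y ×ˢ closure Z ∧
        Phi G x₀ (γ s) = (1 - s) • P + s • Q := by
      intro s hs
      have hmem : (1 - s) • P + s • Q ∈ Phi G x₀ '' (closure Y ×ˢ closure Z) :=
        (hG2 x₀ hx₀) hPmem hQmem (by linarith [hs.2]) hs.1 (by ring)
      obtain ⟨q, hq, hqe⟩ := hmem
      have hγs : γ s = q := by
        simp only [hγdef, ← hqe, hψ q hq]
      rw [hγs, hqe]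
      exact ⟨hq, rfl⟩
    have hγ0 : γ 0 = (y₀, z₀) := by
      apply hinj (key 0 ⟨le_refl 0, zero_le_one⟩).1 ⟨hy₀, hz₀⟩
      rw [(key 0 ⟨le_refl 0, zero_le_one⟩).2, ← hP]
      module
    have hγ1 : γ 1 = (y₁, z₁) := by
      apply hinj (key 1 ⟨zero_le_one, le_refl 1⟩).1 ⟨hy₁, hz₁⟩
      rw [(key 1 ⟨zero_le_one, le_refl 1⟩).2, ← hQ]
      module
    have hseg : IsGSegment Y Z G x₀ γ := by
      refine ⟨fun s hs => (key s hs).1, fun s hs => ?_⟩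
      rw [(key s hs).2, (key 0 ⟨le_refl 0, zero_le_one⟩).2,
        (key 1 ⟨zero_le_one, le_refl 1⟩).2]
      module
    refine ⟨(γ t).1, ((key t ht).1).1, (γ t).2, ((key t ht).1).2, ?_, ?_⟩
    · -- touching at x₀
      have h2 := congrArg Prod.snd (key t ht).2
      simp only [Phi, Prod.snd_add, Prod.smul_snd, smul_eq_mul] at h2
      simp only [h2, ← he₀, ← he₁, hP, hQ, Phi]
    · -- global inequality
      intro x hx
      have hcx := hG3 x hx x₀ hx₀ γ hseg
      have hineq := hcx.2 (Set.left_mem_Icc.mpr zero_le_one)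
        (Set.right_mem_Icc.mpr zero_le_one)
        (show (0:ℝ) ≤ 1 - t by linarith [ht.2]) ht.1 (by ring)
      simp only [smul_eq_mul, mul_zero, mul_one, zero_add] at hineq
      rw [hγ0, hγ1] at hineq
      have hineq' : G x (γ t).1 (γ t).2 ≤ (1 - t) * G x y₀ z₀ + t * G x y₁ z₁ := hineq
      show G x (γ t).1 (γ t).2 ≤ (1 - t) * u₀ x + t * u₁ x
      have h0 := hle₀ x hx
      have h1 := hle₁ x hx
      have ht0 : (0:ℝ) ≤ 1 - t := by linarith [ht.2]
      nlinarith [mul_le_mul_of_nonneg_left h0 ht0, mul_le_mul_of_nonneg_left h1 ht.1, hineq']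
  · -- U convex ⇒ (G3)
    intro hU x hx x₀ hx₀ γ hseg
    refine ⟨convex_Icc 0 1, ?_⟩
    intro s₀ hs₀ s₁ hs₁ a b ha hb hab
    have hm₀ := hseg.1 s₀ hs₀
    have hm₁ := hseg.1 s₁ hs₁
    have hstm : a • s₀ + b • s₁ ∈ Icc (0:ℝ) 1 := (convex_Icc 0 1) hs₀ hs₁ ha hb hab
    have hmt := hseg.1 _ hstm
    have hu₀ : GConvex X Y Z G (fun x' => G x' (γ s₀).1 (γ s₀).2) :=
      fun x' _ => ⟨(γ s₀).1, hm₀.1, (γ s₀).2, hm₀.2, rfl, fun _ _ => le_refl _⟩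
    have hu₁ : GConvex X Y Z G (fun x' => G x' (γ s₁).1 (γ s₁).2) :=
      fun x' _ => ⟨(γ s₁).1, hm₁.1, (γ s₁).2, hm₁.2, rfl, fun _ _ => le_refl _⟩
    obtain ⟨y, hy, z, hz, he, hle⟩ := hU _ _ hu₀ hu₁ b ⟨hb, by linarith⟩ x₀ hx₀
    have hab' : a = 1 - b := by linarith
    have he' : (1 - b) * G x₀ (γ s₀).1 (γ s₀).2 + b * G x₀ (γ s₁).1 (γ s₁).2
        = G x₀ y z := he
    have hle' : ∀ x' ∈ X, G x' y z ≤
        (1 - b) * G x' (γ s₀).1 (γ s₀).2 + b * G x' (γ s₁).1 (γ s₁).2 := hle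
    -- first-order condition at the interior touching point x₀
    have hf₀ := diffAt_slice hG0 hXo hx₀ hm₀.1 hm₀.2
    have hf₁ := diffAt_slice hG0 hXo hx₀ hm₁.1 hm₁.2
    have hg := diffAt_slice hG0 hXo hx₀ hy hz
    have hmin : IsLocalMin (fun x' =>
        ((1 - b) * G x' (γ s₀).1 (γ s₀).2 + b * G x' (γ s₁).1 (γ s₁).2)
          - G x' y z) x₀ := by
      filter_upwards [hXo.mem_nhds hx₀] with x' hx'
      have := hle' x' hx'
      linarith [he']
    have hD : HasFDerivAt (fun x' =>
        ((1 - b) * G x' (γ s₀).1 (γ s₀).2 + b * G x' (γ s₁).1 (γ s₁).2)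
          - G x' y z)
        (((1 - b) • fderiv ℝ (fun x' => G x' (γ s₀).1 (γ s₀).2) x₀
          + b • fderiv ℝ (fun x' => G x' (γ s₁).1 (γ s₁).2) x₀)
          - fderiv ℝ (fun x' => G x' y z) x₀) x₀ :=
      ((hf₀.hasFDerivAt.const_mul (1 - b)).add
        (hf₁.hasFDerivAt.const_mul b)).sub hg.hasFDerivAt
    have hzero := hmin.hasFDerivAt_eq_zero hD
    have hDg : fderiv ℝ (fun x' => G x' y z) x₀
        = (1 - b) • fderiv ℝ (fun x' => G x' (γ s₀).1 (γ s₀).2) x₀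
          + b • fderiv ℝ (fun x' => G x' (γ s₁).1 (γ s₁).2) x₀ :=
      (sub_eq_zero.mp hzero).symm
    have hGx : Gx G x₀ y z
        = (1 - b) • Gx G x₀ (γ s₀).1 (γ s₀).2 + b • Gx G x₀ (γ s₁).1 (γ s₁).2 := by
      simp only [Gx, gradient, hDg, map_add, _root_.map_smul]
    have hPhi : Phi G x₀ (y, z)
        = (1 - b) • Phi G x₀ (γ s₀) + b • Phi G x₀ (γ s₁) := by
      simp only [Phi]
      rw [Prod.ext_iff]
      constructor
      · simpa using hGx
      · simpa using he'.symm
    have hst' : Phi G x₀ (γ (a • s₀ + b • s₁))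
        = (1 - b) • Phi G x₀ (γ s₀) + b • Phi G x₀ (γ s₁) := by
      rw [hseg.2 _ hstm, hseg.2 s₀ hs₀, hseg.2 s₁ hs₁, hab']
      simp only [smul_eq_mul]
      module
    have hinj' := (hG1 x₀ hx₀).2.1
    have hyz : (y, z) = γ (a • s₀ + b • s₁) :=
      hinj' ⟨hy, hz⟩ hmt (hPhi.trans hst'.symm)
    have hfinal := hle' x hx
    show G x (γ (a • s₀ + b • s₁)).1 (γ (a • s₀ + b • s₁)).2
      ≤ a • G x (γ s₀).1 (γ s₀).2 + b • G x (γ s₁).1 (γ s₁).2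
    rw [← hyz]
    simp only [smul_eq_mul, hab']
    exact hfinal

end PrincipalAgent
end
end
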